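/- arXiv:1101.3596 — 3 statements merged into one kernel-verified Lean document; each statement's English description precedes it below -/
import Mathlib

section
/- Let n ∈ ℕ and j ≤ n. There exists a function η : (0,1) → ℝ with η(t) → 0 as t → 0 such that for every δ₁ ∈ (0,1) and every A ⊆ ℝⁿ with A ∈ R(w,ρ,δ₁;j), the packing dimension of A satisfies dim_P A ≤ j + η(δ₁). -/
open Metric Set MeasureTheory ENNReal NNReal

attribute [local instance] Classical.propDecidable

noncomputable section

namespace ReifenbergPaper

/-- The closed `r`-neighbourhood `E^r = {x : dist (x, E) ≤ r}` of `E ⊆ ℝⁿ`. -/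
def nbhd {n : ℕ} (E : Set (EuclideanSpace ℝ (Fin n))) (r : ℝ) :
    Set (EuclideanSpace ℝ (Fin n)) :=
  {x | Metric.infDist x E ≤ r}

/-- The affine plane through `x` with direction the linear subspace `W`. -/
def affPlane {n : ℕ} (x : EuclideanSpace ℝ (Fin n))
    (W : Submodule ℝ (EuclideanSpace ℝ (Fin n))) : Set (EuclideanSpace ℝ (Fin n)) :=
  {z | z - x ∈ W}

/-- `A ∈ R(w,∅,δ;j)`. -/
def RwEmpty {n : ℕ} (j : ℕ) (δ : ℝ) (A : Set (EuclideanSpace ℝ (Fin n))) : Prop :=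
  ∀ y ∈ A, ∃ ρy > (0:ℝ), ∀ ρ ∈ Set.Ioc (0:ℝ) ρy,
    ∃ W : Submodule ℝ (EuclideanSpace ℝ (Fin n)), Module.finrank ℝ W = j ∧
      Metric.closedBall y ρ ∩ A ⊆ nbhd (affPlane y W) (δ * ρ)

/-- `A ∈ R(w,ρ,δ;j)`. -/
def RwRho {n : ℕ} (j : ℕ) (δ : ℝ) (A : Set (EuclideanSpace ℝ (Fin n))) : Prop :=
  ∀ y ∈ A, ∃ ρy > (0:ℝ), ∀ x ∈ Metric.closedBall y ρy ∩ A, ∀ ρ ∈ Set.Ioc (0:ℝ) ρy,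
    ∃ W : Submodule ℝ (EuclideanSpace ℝ (Fin n)), Module.finrank ℝ W = j ∧
      Metric.closedBall x ρ ∩ A ⊆ nbhd (affPlane x W) (δ * ρ)

/-- `A ∈ R(w,ρ0,δ;j)`. -/
def RwRho0 {n : ℕ} (j : ℕ) (δ : ℝ) (A : Set (EuclideanSpace ℝ (Fin n))) : Prop :=
  ∃ ρ0 > (0:ℝ), (∃ c, A ⊆ Metric.closedBall c ρ0) ∧
    ∀ y ∈ A, ∀ ρ ∈ Set.Ioc (0:ℝ) ρ0,
      ∃ W : Submodule ℝ (EuclideanSpace ℝ (Fin n)), Module.finrank ℝ W = j ∧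
        Metric.closedBall y ρ ∩ A ⊆ nbhd (affPlane y W) (δ * ρ)

/-- `A ∈ R(s,∅,δ;j)`. -/
def RsEmpty {n : ℕ} (j : ℕ) (δ : ℝ) (A : Set (EuclideanSpace ℝ (Fin n))) : Prop :=
  ∀ y ∈ A, ∃ ρy > (0:ℝ), ∃ W : Submodule ℝ (EuclideanSpace ℝ (Fin n)),
    Module.finrank ℝ W = j ∧ ∀ ρ ∈ Set.Ioc (0:ℝ) ρy,
      Metric.closedBall y ρ ∩ A ⊆ nbhd (affPlane y W) (δ * ρ)

/-- `A ∈ R(s,ρ,δ;j)`. -/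
def RsRho {n : ℕ} (j : ℕ) (δ : ℝ) (A : Set (EuclideanSpace ℝ (Fin n))) : Prop :=
  ∀ y ∈ A, ∃ ρy > (0:ℝ), ∃ W : Submodule ℝ (EuclideanSpace ℝ (Fin n)),
    Module.finrank ℝ W = j ∧
    ∀ x ∈ Metric.closedBall y ρy ∩ A, ∀ ρ ∈ Set.Ioc (0:ℝ) ρy,
      Metric.closedBall x ρ ∩ A ⊆ nbhd (affPlane x W) (δ * ρ)

/-- `A ∈ R(s,ρ0,δ;j)`. -/
def RsRho0 {n : ℕ} (j : ℕ) (δ : ℝ) (A : Set (EuclideanSpace ℝ (Fin n))) : Prop :=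
  ∃ ρ0 > (0:ℝ), (∃ c, A ⊆ Metric.closedBall c ρ0) ∧
    ∃ W : Submodule ℝ (EuclideanSpace ℝ (Fin n)), Module.finrank ℝ W = j ∧
      ∀ x ∈ A, ∀ ρ ∈ Set.Ioc (0:ℝ) ρ0,
        Metric.closedBall x ρ ∩ A ⊆ nbhd (affPlane x W) (δ * ρ)

/-- The weak/strong parameter `α`. -/
inductive Alpha | w | s

/-- The uniformity parameter `β ∈ {∅, ρ, ρ0}`. -/
inductive Beta | none | rho | rho0

/-- `A ∈ R(α,β,δ;j)` for a fixed approximation constant `δ`. -/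
def RDelta {n : ℕ} (α : Alpha) (β : Beta) (j : ℕ) (δ : ℝ)
    (A : Set (EuclideanSpace ℝ (Fin n))) : Prop :=
  match α, β with
  | .w, .none => RwEmpty j δ A
  | .w, .rho  => RwRho j δ A
  | .w, .rho0 => RwRho0 j δ A
  | .s, .none => RsEmpty j δ A
  | .s, .rho  => RsRho j δ A
  | .s, .rho0 => RsRho0 j δ A

/-- `A ∈ R(α,β,γ;j)` where `γ : Option ℝ`, with `Option.none` denoting the fine
property (`δ`-approximation for every `δ ∈ (0,1)`) and `Option.some δ` denoting the
`δ`-approximation property. -/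
def RGamma {n : ℕ} (α : Alpha) (β : Beta) (j : ℕ) (γ : Option ℝ)
    (A : Set (EuclideanSpace ℝ (Fin n))) : Prop :=
  match γ with
  | Option.none => ∀ δ ∈ Set.Ioo (0:ℝ) 1, RDelta α β j δ A
  | Option.some δ => RDelta α β j δ A

/-- `γ ∈ Δ := {fine} ∪ (0,1)`. -/
def memDelta (γ : Option ℝ) : Prop :=
  γ = Option.none ∨ ∃ d ∈ Set.Ioo (0:ℝ) 1, γ = Option.some d

/-- The graph `{x + g x : x ∈ W}` of a function `g : W → Wᗮ`. -/
def lipGraph {n : ℕ} (W : Submodule ℝ (EuclideanSpace ℝ (Fin n)))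
    (g : W → Wᗮ) : Set (EuclideanSpace ℝ (Fin n)) :=
  {p | ∃ x : W, p = (x : EuclideanSpace ℝ (Fin n)) + (g x : EuclideanSpace ℝ (Fin n))}

/-- `N_ε(E)`: the smallest number of sets of diameter at most `ε` needed to cover `E`,
as an element of `ℝ≥0∞` (`⊤` if no finite cover exists). -/
def coverNum {n : ℕ} (E : Set (EuclideanSpace ℝ (Fin n))) (ε : ℝ) : ℝ≥0∞ :=
  ⨅ (s : Finset (Set (EuclideanSpace ℝ (Fin n)))) (_ : E ⊆ ⋃ t ∈ s, t)
    (_ : ∀ t ∈ s, Metric.diam t ≤ ε), (s.card : ℝ≥0∞)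

/-- Upper Minkowski (box-counting) dimension
`limsup_{ε → 0⁺} log N_ε(E) / (- log ε)`, with the convention that the empty set
has dimension `0`. -/
def upperMinkDim {n : ℕ} (E : Set (EuclideanSpace ℝ (Fin n))) : ℝ :=
  if E = ∅ then 0 else
    Filter.limsup (fun ε : ℝ => Real.log (coverNum E ε).toReal / (-Real.log ε))
      (nhdsWithin 0 (Set.Ioi 0))

/-- Lower Minkowski (box-counting) dimension
`liminf_{ε → 0⁺} log N_ε(E) / (- log ε)`, with the convention that the empty set
has dimension `0`. -/
def lowerMinkDim {n : ℕ} (E : Set (EuclideanSpace ℝ (Fin n))) : ℝ :=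
  if E = ∅ then 0 else
    Filter.liminf (fun ε : ℝ => Real.log (coverNum E ε).toReal / (-Real.log ε))
      (nhdsWithin 0 (Set.Ioi 0))

/-- Packing dimension:
`dim_P A = inf { sup_i dim̄_M A_i : A = ⋃ i, A_i, each A_i bounded }`. -/
def packDim {n : ℕ} (A : Set (EuclideanSpace ℝ (Fin n))) : ℝ :=
  sInf {d : ℝ | ∃ F : ℕ → Set (EuclideanSpace ℝ (Fin n)),
    A = ⋃ i, F i ∧ (∀ i, Bornology.IsBounded (F i)) ∧ ∀ i, upperMinkDim (F i) ≤ d}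

/-- `D` is an `η`-packing of `E`: a countable collection of pairwise disjoint closed
balls centred at points of `E` with (positive) radii at most `η`, coded as a set of
(centre, radius) pairs. -/
def IsPacking {n : ℕ} (η : ℝ) (E : Set (EuclideanSpace ℝ (Fin n)))
    (D : Set (EuclideanSpace ℝ (Fin n) × ℝ)) : Prop :=
  D.Countable ∧ (∀ p ∈ D, p.1 ∈ E ∧ 0 < p.2 ∧ p.2 ≤ η) ∧
    D.Pairwise fun p q => Disjoint (Metric.closedBall p.1 p.2) (Metric.closedBall q.1 q.2)

/-- The packing premeasure `P^s_η(E) = sup { Σ_i (diam B_i)^s }` over `η`-packings. -/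
def packPre {n : ℕ} (s : ℕ) (η : ℝ) (E : Set (EuclideanSpace ℝ (Fin n))) : ℝ≥0∞ :=
  ⨆ (D : Set (EuclideanSpace ℝ (Fin n) × ℝ)) (_ : IsPacking η E D),
    ∑' p : D, (ENNReal.ofReal (Metric.diam (Metric.closedBall p.1.1 p.1.2))) ^ s

/-- `P^s_0(E) = lim_{η ↓ 0} P^s_η(E) = inf_{η > 0} P^s_η(E)`. -/
def packPre0 {n : ℕ} (s : ℕ) (E : Set (EuclideanSpace ℝ (Fin n))) : ℝ≥0∞ :=
  ⨅ (η : ℝ) (_ : 0 < η), packPre s η E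

/-- The `s`-dimensional packing measure
`P^s(E) = inf { Σ_i P^s_0(E_i) : E ⊆ ⋃ i, E_i }`. -/
def packMeasure {n : ℕ} (s : ℕ) (E : Set (EuclideanSpace ℝ (Fin n))) : ℝ≥0∞ :=
  ⨅ (F : ℕ → Set (EuclideanSpace ℝ (Fin n))) (_ : E ⊆ ⋃ i, F i), ∑' i, packPre0 s (F i)

/-- `A` is `(μ, j)`-rectifiable: `A ⊆ M₀ ∪ ⋃ i, f i '' ℝ^j` with `μ M₀ = 0` and each
`f i` Lipschitz. -/
def Rectifiable {n : ℕ} (μ : Set (EuclideanSpace ℝ (Fin n)) → ℝ≥0∞) (j : ℕ)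
    (A : Set (EuclideanSpace ℝ (Fin n))) : Prop :=
  ∃ (M₀ : Set (EuclideanSpace ℝ (Fin n)))
    (f : ℕ → EuclideanSpace ℝ (Fin j) → EuclideanSpace ℝ (Fin n)),
    μ M₀ = 0 ∧ (∀ i, ∃ K : ℝ≥0, LipschitzWith K (f i)) ∧
      A ⊆ M₀ ∪ ⋃ i, Set.range (f i)

/-- `A` has weakly locally finite `μ` measure. -/
def WeaklyLocFinite {n : ℕ} (μ : Set (EuclideanSpace ℝ (Fin n)) → ℝ≥0∞)
    (A : Set (EuclideanSpace ℝ (Fin n))) : Prop :=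
  ∀ y ∈ A, ∃ ρ > (0:ℝ), μ (Metric.closedBall y ρ ∩ A) < ⊤

/-- `A` has strongly locally finite `μ` measure. -/
def StronglyLocFinite {n : ℕ} (μ : Set (EuclideanSpace ℝ (Fin n)) → ℝ≥0∞)
    (A : Set (EuclideanSpace ℝ (Fin n))) : Prop :=
  ∀ K : Set (EuclideanSpace ℝ (Fin n)), IsCompact K → μ (K ∩ A) < ⊤

/-- `A` satisfies the two-sided `wρ j` property with respect to `ε`. -/
def TwoSidedWRho {n : ℕ} (j : ℕ) (ε : ℝ) (A : Set (EuclideanSpace ℝ (Fin n))) : Prop :=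
  ∀ y ∈ A, ∃ ρy > (0:ℝ), ∀ x ∈ A ∩ Metric.closedBall y ρy, ∀ ρ ∈ Set.Ioc (0:ℝ) ρy,
    ∃ (x0 : EuclideanSpace ℝ (Fin n)) (W : Submodule ℝ (EuclideanSpace ℝ (Fin n))),
      Module.finrank ℝ W = j ∧
      Metric.hausdorffDist (A ∩ Metric.closedBall x ρ)
        (affPlane x0 W ∩ Metric.closedBall x ρ) < ε * ρ

/-- The set `N_j = ⋃_{i ≥ 1} {i⁻¹} × [0,1]^j ⊆ ℝ^{j+1}`. -/
def NSet (j : ℕ) : Set (EuclideanSpace ℝ (Fin (j+1))) :=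
  {x | ∃ i : ℕ, 1 ≤ i ∧ x 0 = ((i : ℝ))⁻¹ ∧ ∀ k : Fin (j+1), k ≠ 0 → x k ∈ Set.Icc (0:ℝ) 1}


open Filter

lemma coord_abs_le_norm {j : ℕ} (x : EuclideanSpace ℝ (Fin j)) (k : Fin j) : |x k| ≤ ‖x‖ := by
  rw [EuclideanSpace.norm_eq]
  rw [Real.le_sqrt (abs_nonneg _) (by positivity)]
  rw [sq_abs]
  have : (x k)^2 = ‖x k‖^2 := by rw [Real.norm_eq_abs, sq_abs]
  rw [this]
  exact Finset.single_le_sum (f := fun i => ‖x i‖^2) (fun i _ => sq_nonneg _) (Finset.mem_univ k)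

lemma exists_cover_ball (j : ℕ) : ∀ δ : ℝ, 0 < δ → δ < 1 →
    ∃ T : Finset (EuclideanSpace ℝ (Fin j)),
      (Metric.closedBall (0:EuclideanSpace ℝ (Fin j)) 2 ⊆ ⋃ g ∈ T, Metric.closedBall g δ) ∧
      (T.card : ℝ) * δ^j ≤ (9*(j+1))^j := by
  intro δ hδ0 hδ1
  set h : ℝ := δ / (j+1) with hh
  have hj1 : (0:ℝ) < (j:ℝ)+1 := by positivity
  have hhpos : 0 < h := by positivity
  obtain ⟨m, hmR2, hmR⟩ : ∃ m : ℕ, 2/h + 1/2 ≤ (m:ℝ) ∧ (m:ℝ) ≤ 2/h + 2 := by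
    refine ⟨⌈2/h⌉₊ + 1, ?_, ?_⟩
    · push_cast
      have := Nat.le_ceil (2/h)
      linarith
    · push_cast
      have := Nat.ceil_lt_add_one (by positivity : (0:ℝ) ≤ 2/h)
      linarith
  set G : Finset (Fin j → ℤ) := Fintype.piFinset fun _ : Fin j => Finset.Icc (-(m:ℤ)) (m:ℤ) with hG
  set T : Finset (EuclideanSpace ℝ (Fin j)) :=
    G.image (fun z => (WithLp.toLp 2 (fun k => h * z k) : EuclideanSpace ℝ (Fin j))) with hT
  refine ⟨T, ?_, ?_⟩
  · intro x hx
    have hxn : ‖x‖ ≤ 2 := by simpa [Metric.mem_closedBall, dist_zero_right] using hx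
    set z : Fin j → ℤ := fun k => round (x k / h) with hz
    have hzb : ∀ k, |x k - h * z k| ≤ h / 2 := by
      intro k
      have h2 : |x k / h - round (x k / h)| ≤ 1/2 := abs_sub_round _
      have e : x k - h * z k = h * (x k / h - round (x k / h)) := by
        field_simp [hz]; rfl
      rw [e, abs_mul, abs_of_pos hhpos]
      calc h * |x k / h - round (x k / h)| ≤ h * (1/2) :=
            mul_le_mul_of_nonneg_left h2 hhpos.le
        _ = h / 2 := by ring
    have hzG : z ∈ G := by
      simp only [hG, Fintype.mem_piFinset, Finset.mem_Icc, ← abs_le]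
      intro k
      have hxk : |x k| ≤ 2 := (coord_abs_le_norm x k).trans hxn
      have h1 : |x k / h| ≤ 2 / h := by
        rw [abs_div, abs_of_pos hhpos]
        gcongr
      have h2 : |(z k : ℝ)| ≤ 2/h + 1/2 := by
        calc |(z k : ℝ)| ≤ |(z k : ℝ) - x k / h| + |x k / h| := by
              simpa using abs_add_le ((z k : ℝ) - x k / h) (x k / h)
          _ ≤ 1/2 + 2/h := by
              gcongr
              rw [abs_sub_comm]; exact abs_sub_round _
          _ = 2/h + 1/2 := by ring
      have h4 : ((|z k| : ℤ) : ℝ) ≤ ((m:ℤ) : ℝ) := by push_cast; exact h2.trans hmR2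
      exact_mod_cast h4
    refine mem_iUnion₂.2 ⟨_, Finset.mem_image_of_mem _ hzG, ?_⟩
    rw [Metric.mem_closedBall, EuclideanSpace.dist_eq]
    have hsum : ∑ k, dist (x k) (h * z k) ^ 2 ≤ δ^2 := by
      have hb : ∀ k : Fin j, dist (x k) (h * z k) ^2 ≤ (h/2)^2 := by
        intro k
        have := hzb k
        rw [Real.dist_eq]
        nlinarith [abs_nonneg (x k - h * z k)]
      have e2 : ((h/2)^2 : ℝ) = δ^2 / (4*((j:ℝ)+1)^2) := by
        rw [hh]; field_simp; ring
      calc ∑ k, dist (x k) (h * z k) ^ 2 ≤ ∑ _k : Fin j, (h/2)^2 :=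
            Finset.sum_le_sum (fun k _ => hb k)
        _ = (j:ℝ) * (δ^2 / (4*((j:ℝ)+1)^2)) := by
            rw [Finset.sum_const, e2]; simp
        _ ≤ (4*((j:ℝ)+1)^2) * (δ^2 / (4*((j:ℝ)+1)^2)) := by
            apply mul_le_mul_of_nonneg_right
            · nlinarith [Nat.cast_nonneg (α := ℝ) j]
            · positivity
        _ = δ^2 := by field_simp
    calc Real.sqrt (∑ k, dist (x k) (h * z k) ^ 2) ≤ Real.sqrt (δ^2) := Real.sqrt_le_sqrt hsum
      _ = δ := Real.sqrt_sq hδ0.le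
  · have hcard : T.card ≤ (2*m+1)^j := by
      calc T.card ≤ G.card := Finset.card_image_le
        _ = (2*m+1)^j := by
            rw [hG, Fintype.card_piFinset]
            simp only [Int.card_Icc]
            have e3 : ((m:ℤ) + 1 - -(m:ℤ)).toNat = 2*m+1 := by omega
            rw [e3]
            simp
    have hmb : ((2*m+1 : ℕ) : ℝ) * δ ≤ 9*((j:ℝ)+1) := by
      have h2 : ((2*m+1:ℕ):ℝ) ≤ 2*(2/h) + 5 := by push_cast; linarith
      have h3 : (2*(2/h) + 5) * δ ≤ 9*((j:ℝ)+1) := by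
        have e : (2:ℝ)/h = 2*((j:ℝ)+1)/δ := by rw [hh]; field_simp
        rw [e]
        have e2 : (2*(2*((j:ℝ)+1)/δ)+5)*δ = 4*((j:ℝ)+1) + 5*δ := by
          field_simp; ring
        rw [e2]
        nlinarith [Nat.cast_nonneg (α := ℝ) j]
      calc ((2*m+1:ℕ):ℝ) * δ ≤ (2*(2/h)+5) * δ := by gcongr
        _ ≤ _ := h3
    calc (T.card : ℝ) * δ^j ≤ ((2*m+1)^j : ℕ) * δ^j := by
          apply mul_le_mul_of_nonneg_right _ (by positivity)
          exact_mod_cast hcard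
      _ = (((2*m+1:ℕ):ℝ) * δ)^j := by push_cast [← mul_pow]; ring
      _ ≤ (9*((j:ℝ)+1))^j := pow_le_pow_left₀ (by positivity) hmb j

lemma cover_plane (n j : ℕ) : ∀ δ : ℝ, 0 < δ → δ < 1 →
    ∀ (W : Submodule ℝ (EuclideanSpace ℝ (Fin n))), Module.finrank ℝ W = j →
    ∀ (x : EuclideanSpace ℝ (Fin n)) (ρ : ℝ), 0 < ρ →
    ∃ T : Finset (EuclideanSpace ℝ (Fin n)),
      (affPlane x W ∩ Metric.closedBall x (2*ρ) ⊆ ⋃ g ∈ T, Metric.closedBall g (δ*ρ)) ∧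
      (T.card : ℝ) * δ^j ≤ (9*(j+1))^j := by
  intro δ hδ0 hδ1 W hW x ρ hρ
  obtain ⟨T0, hcov, hcard⟩ := exists_cover_ball j δ hδ0 hδ1
  let b : OrthonormalBasis (Fin j) ℝ W := (stdOrthonormalBasis ℝ W).reindex (finCongr hW)
  let ψ : EuclideanSpace ℝ (Fin j) ≃ₗᵢ[ℝ] W := b.repr.symm
  refine ⟨T0.image (fun g => x + (ψ (ρ • g) : EuclideanSpace ℝ (Fin n))), ?_, ?_⟩
  · rintro z ⟨hz1, hz2⟩
    have hz1' : z - x ∈ W := hz1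
    set u : EuclideanSpace ℝ (Fin j) := b.repr ⟨z - x, hz1'⟩ with hu
    have hun : ‖u‖ = ‖z - x‖ := by
      rw [hu, LinearIsometryEquiv.norm_map]
      rfl
    have hzx : ‖z - x‖ ≤ 2*ρ := by
      rw [← dist_eq_norm]
      exact hz2
    have hu2 : ρ⁻¹ • u ∈ Metric.closedBall (0:EuclideanSpace ℝ (Fin j)) 2 := by
      rw [Metric.mem_closedBall, dist_zero_right, norm_smul, Real.norm_eq_abs,
        abs_of_pos (inv_pos.2 hρ), hun]
      calc ρ⁻¹ * ‖z - x‖ ≤ ρ⁻¹ * (2*ρ) := by gcongr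
        _ = 2 := by field_simp
    obtain ⟨g, hgT, hg⟩ := mem_iUnion₂.1 (hcov hu2)
    refine mem_iUnion₂.2 ⟨_, Finset.mem_image_of_mem _ hgT, ?_⟩
    rw [Metric.mem_closedBall]
    have e1 : z - (x + (ψ (ρ • g) : EuclideanSpace ℝ (Fin n)))
        = ((ψ u - ψ (ρ • g) : W) : EuclideanSpace ℝ (Fin n)) := by
      push_cast
      have : ((ψ u : W) : EuclideanSpace ℝ (Fin n)) = z - x := by
        rw [hu]
        show ((b.repr.symm (b.repr ⟨z - x, hz1'⟩) : W) : EuclideanSpace ℝ (Fin n)) = z - x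
        rw [LinearIsometryEquiv.symm_apply_apply]
      rw [this]
      abel
    rw [dist_eq_norm, e1]
    have e2 : ‖((ψ u - ψ (ρ • g) : W) : EuclideanSpace ℝ (Fin n))‖ = ‖u - ρ • g‖ := by
      rw [← Submodule.coe_norm, ← map_sub, LinearIsometryEquiv.norm_map]
    rw [e2]
    have e3 : u - ρ • g = ρ • (ρ⁻¹ • u - g) := by
      rw [smul_sub, smul_smul, mul_inv_cancel₀ (ne_of_gt hρ), one_smul]
    rw [e3, norm_smul, Real.norm_eq_abs, abs_of_pos hρ]
    calc ρ * ‖ρ⁻¹ • u - g‖ ≤ ρ * δ := by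
          apply mul_le_mul_of_nonneg_left _ hρ.le
          rw [← dist_eq_norm]
          exact hg
      _ = δ * ρ := mul_comm _ _
  · refine le_trans ?_ hcard
    apply mul_le_mul_of_nonneg_right _ (by positivity)
    exact_mod_cast Finset.card_image_le

lemma one_le_coverNum {n : ℕ} {E : Set (EuclideanSpace ℝ (Fin n))} (hE : E.Nonempty)
    (ε : ℝ) : 1 ≤ coverNum E ε := by
  refine le_iInf fun s => le_iInf fun hc => le_iInf fun _ => ?_
  obtain ⟨x, hx⟩ := hE
  obtain ⟨t, ht, -⟩ := mem_iUnion₂.1 (hc hx)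
  have : 0 < s.card := Finset.card_pos.2 ⟨t, ht⟩
  exact_mod_cast Nat.one_le_cast.2 this

lemma coverNum_le_of_ball_cover {n : ℕ} {S : Set (EuclideanSpace ℝ (Fin n))}
    {T : Finset (EuclideanSpace ℝ (Fin n))} {r ε : ℝ}
    (h : S ⊆ ⋃ a ∈ T, Metric.closedBall a r) (hr : 0 ≤ r) (hε : 2*r ≤ ε) :
    coverNum S ε ≤ (T.card : ℝ≥0∞) := by
  set s : Finset (Set (EuclideanSpace ℝ (Fin n))) :=
    T.image (fun a => Metric.closedBall a r) with hs
  have hc : S ⊆ ⋃ t ∈ s, t := by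
    intro z hz
    obtain ⟨a, ha, hza⟩ := mem_iUnion₂.1 (h hz)
    exact mem_iUnion₂.2 ⟨_, Finset.mem_image_of_mem _ ha, hza⟩
  have hd : ∀ t ∈ s, Metric.diam t ≤ ε := by
    intro t ht
    obtain ⟨a, -, rfl⟩ := Finset.mem_image.1 ht
    exact (Metric.diam_closedBall hr).trans hε
  calc coverNum S ε ≤ (s.card : ℝ≥0∞) :=
        iInf_le_of_le s (iInf_le_of_le hc (iInf_le_of_le hd le_rfl))
    _ ≤ (T.card : ℝ≥0∞) := by exact_mod_cast Finset.card_image_le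


variable {n j : ℕ} {δ : ℝ} {A : Set (EuclideanSpace ℝ (Fin n))}
  {y : EuclideanSpace ℝ (Fin n)} {ρy : ℝ}

lemma step_cover (hδ0 : 0 < δ) (hδ6 : δ < 1/6) (hρy : 0 < ρy)
    (H : ∀ x ∈ Metric.closedBall y ρy ∩ A, ∀ ρ ∈ Set.Ioc (0:ℝ) ρy,
      ∃ W : Submodule ℝ (EuclideanSpace ℝ (Fin n)), Module.finrank ℝ W = j ∧
        Metric.closedBall x ρ ∩ A ⊆ nbhd (affPlane x W) (δ * ρ)) :
    ∀ x ∈ Metric.closedBall y ρy ∩ A, ∀ ρ ∈ Set.Ioc (0:ℝ) ρy,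
      ∃ T : Finset (EuclideanSpace ℝ (Fin n)),
        (↑T : Set (EuclideanSpace ℝ (Fin n))) ⊆ A ∩ Metric.closedBall y ρy ∩ Metric.closedBall x ρ ∧
        (A ∩ Metric.closedBall y ρy ∩ Metric.closedBall x ρ ⊆ ⋃ a ∈ T, Metric.closedBall a (6*δ*ρ)) ∧
        (T.card : ℝ) * δ^j ≤ (9*(j+1))^j := by
  intro x hx ρ hρ
  obtain ⟨W, hW, hWs⟩ := H x hx ρ hρ
  obtain ⟨T0, hcov, hcard⟩ := cover_plane n j δ hδ0 (by linarith) W hW x ρ hρ.1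
  set Q : Set (EuclideanSpace ℝ (Fin n)) :=
    A ∩ Metric.closedBall y ρy ∩ Metric.closedBall x ρ with hQ
  set P : EuclideanSpace ℝ (Fin n) → Prop := fun g =>
    ∃ a, a ∈ Q ∧ dist a g ≤ 3*(δ*ρ) with hP
  set c : EuclideanSpace ℝ (Fin n) → EuclideanSpace ℝ (Fin n) := fun g =>
    if h : P g then h.choose else x with hc
  have hxQ : x ∈ Q := ⟨⟨hx.2, hx.1⟩, Metric.mem_closedBall_self hρ.1.le⟩
  have hcQ : ∀ g, c g ∈ Q := by
    intro g
    by_cases h : P g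
    · simp only [hc, dif_pos h]; exact h.choose_spec.1
    · simp only [hc, dif_neg h]; exact hxQ
  refine ⟨T0.image c, ?_, ?_, ?_⟩
  · intro a ha
    obtain ⟨g, -, rfl⟩ := Finset.mem_image.1 (Finset.mem_coe.1 ha)
    exact hcQ g
  · intro a haQ
    have haA : a ∈ Metric.closedBall x ρ ∩ A := ⟨haQ.2, haQ.1.1⟩
    have hinf : Metric.infDist a (affPlane x W) ≤ δ * ρ := hWs haA
    have hne : (affPlane x W).Nonempty := ⟨x, by simp [affPlane]⟩
    have hlt : Metric.infDist a (affPlane x W) < 2*(δ*ρ) :=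
      lt_of_le_of_lt hinf (by nlinarith [hρ.1, hδ0])
    obtain ⟨p, hpW, hpd⟩ := (Metric.infDist_lt_iff hne).1 hlt
    have hpB : p ∈ Metric.closedBall x (2*ρ) := by
      rw [Metric.mem_closedBall]
      have h1 : dist p x ≤ dist p a + dist a x := dist_triangle _ _ _
      have h2 : dist a x ≤ ρ := haQ.2
      rw [dist_comm p a] at h1
      nlinarith [hρ.1]
    obtain ⟨g, hgT, hgp⟩ := mem_iUnion₂.1 (hcov ⟨hpW, hpB⟩)
    have hag : dist a g ≤ 3*(δ*ρ) := by
      have := dist_triangle a p g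
      have h3 : dist p g ≤ δ * ρ := hgp
      nlinarith
    have hPg : P g := ⟨a, haQ, hag⟩
    refine mem_iUnion₂.2 ⟨c g, Finset.mem_image_of_mem _ hgT, ?_⟩
    rw [Metric.mem_closedBall]
    have h4 : dist (c g) g ≤ 3*(δ*ρ) := by
      simp only [hc, dif_pos hPg]
      exact hPg.choose_spec.2
    have := dist_triangle a g (c g)
    rw [dist_comm g (c g)] at this
    nlinarith
  · refine le_trans ?_ hcard
    apply mul_le_mul_of_nonneg_right _ (by positivity)
    exact_mod_cast Finset.card_image_le

lemma iterate_cover (hδ0 : 0 < δ) (hδ6 : δ < 1/6) (hy : y ∈ A) (hρy : 0 < ρy)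
    (H : ∀ x ∈ Metric.closedBall y ρy ∩ A, ∀ ρ ∈ Set.Ioc (0:ℝ) ρy,
      ∃ W : Submodule ℝ (EuclideanSpace ℝ (Fin n)), Module.finrank ℝ W = j ∧
        Metric.closedBall x ρ ∩ A ⊆ nbhd (affPlane x W) (δ * ρ)) :
    ∀ k : ℕ, ∃ T : Finset (EuclideanSpace ℝ (Fin n)),
      (↑T : Set (EuclideanSpace ℝ (Fin n))) ⊆ A ∩ Metric.closedBall y ρy ∧
      (A ∩ Metric.closedBall y ρy ⊆ ⋃ a ∈ T, Metric.closedBall a ((6*δ)^k * ρy)) ∧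
      (T.card : ℝ) ≤ ((9*(j+1))^j / δ^j)^k := by
  intro k
  induction k with
  | zero =>
    refine ⟨{y}, ?_, ?_, ?_⟩
    · intro a ha
      simp only [Finset.coe_singleton, Set.mem_singleton_iff] at ha
      subst ha
      exact ⟨hy, Metric.mem_closedBall_self hρy.le⟩
    · intro a ha
      simp only [pow_zero, one_mul]
      exact mem_iUnion₂.2 ⟨y, Finset.mem_singleton_self y, ha.2⟩
    · simp
  | succ k ih =>
    obtain ⟨T, hT1, hT2, hT3⟩ := ih
    have hρk : (6*δ)^k * ρy ∈ Set.Ioc (0:ℝ) ρy := by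
      constructor
      · positivity
      · have h1 : (6*δ)^k ≤ 1 := pow_le_one₀ (by linarith) (by linarith)
        nlinarith
    have hstep : ∀ a : {z // z ∈ T}, ∃ Ta : Finset (EuclideanSpace ℝ (Fin n)),
        (↑Ta : Set (EuclideanSpace ℝ (Fin n))) ⊆ A ∩ Metric.closedBall y ρy ∩ Metric.closedBall a.1 ((6*δ)^k * ρy) ∧
        (A ∩ Metric.closedBall y ρy ∩ Metric.closedBall a.1 ((6*δ)^k * ρy) ⊆
          ⋃ w ∈ Ta, Metric.closedBall w (6*δ*((6*δ)^k * ρy))) ∧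
        (Ta.card : ℝ) * δ^j ≤ (9*(j+1))^j := by
      intro a
      have haT := hT1 (Finset.mem_coe.2 a.2)
      exact step_cover hδ0 hδ6 hρy H a.1 ⟨haT.2, haT.1⟩ _ hρk
    choose F hF1 hF2 hF3 using hstep
    refine ⟨T.attach.biUnion F, ?_, ?_, ?_⟩
    · intro w hw
      obtain ⟨a, -, hwa⟩ := Finset.mem_biUnion.1 (Finset.mem_coe.1 hw)
      exact (hF1 a hwa).1
    · intro s hs
      obtain ⟨a, haT, hsa⟩ := mem_iUnion₂.1 (hT2 hs)
      obtain ⟨w, hwF, hsw⟩ := mem_iUnion₂.1 ((hF2 ⟨a, Finset.mem_coe.1 haT⟩) ⟨hs, hsa⟩)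
      refine mem_iUnion₂.2 ⟨w, Finset.mem_biUnion.2 ⟨⟨a, Finset.mem_coe.1 haT⟩, Finset.mem_attach _ _, hwF⟩, ?_⟩
      have e : (6*δ)^(k+1) * ρy = 6*δ*((6*δ)^k * ρy) := by ring
      rw [e]
      exact hsw
    · have hδj : (0:ℝ) < δ^j := by positivity
      have hB : ∀ a : {z // z ∈ T}, ((F a).card : ℝ) ≤ (9*(j+1))^j / δ^j := by
        intro a
        rw [le_div_iff₀ hδj]
        exact hF3 a
      calc ((T.attach.biUnion F).card : ℝ) ≤ ∑ a ∈ T.attach, ((F a).card : ℝ) := by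
            exact_mod_cast Finset.card_biUnion_le
        _ ≤ ∑ _a ∈ T.attach, ((9*(j+1))^j / δ^j : ℝ) := Finset.sum_le_sum (fun a _ => hB a)
        _ = (T.card : ℝ) * ((9*(j+1))^j / δ^j) := by
            rw [Finset.sum_const, Finset.card_attach]
            simp [nsmul_eq_mul]
        _ ≤ ((9*(j+1))^j / δ^j)^k * ((9*(j+1))^j / δ^j) := by
            apply mul_le_mul_of_nonneg_right hT3 (by positivity)
        _ = ((9*(j+1))^j / δ^j)^(k+1) := by ring

lemma log_coverNum_nonneg {S : Set (EuclideanSpace ℝ (Fin n))} (hSne : S.Nonempty) (ε : ℝ) :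
    0 ≤ Real.log (coverNum S ε).toReal := by
  by_cases h : coverNum S ε = ⊤
  · simp [h]
  · apply Real.log_nonneg
    have := ENNReal.toReal_mono h (one_le_coverNum hSne ε)
    simpa using this

lemma piece_dim (hδ0 : 0 < δ) (hδ6 : δ < 1/6) (hy : y ∈ A) (hρy : 0 < ρy)
    (H : ∀ x ∈ Metric.closedBall y ρy ∩ A, ∀ ρ ∈ Set.Ioc (0:ℝ) ρy,
      ∃ W : Submodule ℝ (EuclideanSpace ℝ (Fin n)), Module.finrank ℝ W = j ∧
        Metric.closedBall x ρ ∩ A ⊆ nbhd (affPlane x W) (δ * ρ)) :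
    upperMinkDim (A ∩ Metric.closedBall y ρy) ≤
      j + (Real.log ((9*((j:ℝ)+1))^j) + j * Real.log 6) / Real.log (1/(6*δ)) := by
  set S := A ∩ Metric.closedBall y ρy with hS
  have hSne : S.Nonempty := ⟨y, hy, Metric.mem_closedBall_self hρy.le⟩
  set L : ℝ := Real.log (1/(6*δ)) with hL
  have hLpos : 0 < L := Real.log_pos (by rw [lt_div_iff₀ (by linarith)]; linarith)
  set B : ℝ := (9*((j:ℝ)+1))^j / δ^j with hB
  have hB1 : (1:ℝ) ≤ B := by
    rw [hB, le_div_iff₀ (by positivity), one_mul]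
    calc δ^j ≤ 1^j := pow_le_pow_left₀ hδ0.le (by linarith) j
      _ ≤ (9*((j:ℝ)+1))^j :=
          pow_le_pow_left₀ (by norm_num) (by nlinarith [Nat.cast_nonneg (α := ℝ) j]) j
  have hBpos : (0:ℝ) < B := by linarith
  have hlogB : 0 ≤ Real.log B := Real.log_nonneg hB1
  set D : ℝ := Real.log B / L with hD
  have hDeq : D = j + (Real.log ((9*((j:ℝ)+1))^j) + j * Real.log 6) / L := by
    have e : Real.log B = j * L + (Real.log ((9*((j:ℝ)+1))^j) + j * Real.log 6) := by
      rw [hB, Real.log_div (by positivity) (by positivity), Real.log_pow (n := j) (x := δ),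
        hL, one_div, Real.log_inv, Real.log_mul (by norm_num) hδ0.ne']
      ring
    rw [hD, e, add_div, mul_div_assoc, div_self hLpos.ne', mul_one]
  rw [upperMinkDim, if_neg (Set.nonempty_iff_ne_empty.1 hSne), ← hDeq]
  set f := fun ε : ℝ => Real.log (coverNum S ε).toReal / (-Real.log ε) with hf
  have key : ∀ ε ∈ Set.Ioo (0:ℝ) (min 1 (2*ρy)), f ε ≤
      ((Real.log (2*ρy) - Real.log ε)/L + 1) * Real.log B / (-Real.log ε) := by
    intro ε hε
    have hε0 : 0 < ε := hε.1
    have hε1 : ε < 1 := lt_of_lt_of_le hε.2 (min_le_left _ _)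
    have hε2 : ε < 2*ρy := lt_of_lt_of_le hε.2 (min_le_right _ _)
    have hlogε : 0 < -Real.log ε := by
      have := Real.log_neg hε0 hε1
      linarith
    set x := Real.log (2*ρy/ε) / L with hx
    have hxnn : 0 ≤ x := by
      apply div_nonneg _ hLpos.le
      apply Real.log_nonneg
      rw [le_div_iff₀ hε0]
      linarith
    set k := ⌈x⌉₊ with hk
    have hkx : (k:ℝ) ≤ x + 1 := le_of_lt (Nat.ceil_lt_add_one hxnn)
    have hrad : 2*((6*δ)^k * ρy) ≤ ε := by
      have h6δ : (0:ℝ) < 6*δ := by linarith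
      have e1 : (6*δ)^k = Real.exp (-((k:ℝ)*L)) := by
        conv_lhs => rw [← Real.exp_log h6δ]
        rw [← Real.exp_nat_mul]
        congr 1
        rw [hL, one_div, Real.log_inv]
        ring
      have h2 : Real.log (2*ρy/ε) ≤ (k:ℝ) * L := by
        have hcl : x ≤ (k:ℝ) := Nat.le_ceil x
        have h2' : x * L ≤ (k:ℝ) * L := mul_le_mul_of_nonneg_right hcl hLpos.le
        rw [hx, div_mul_cancel₀ _ hLpos.ne'] at h2'
        exact h2'
      have h3 : Real.exp (-((k:ℝ)*L)) ≤ ε/(2*ρy) := by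
        rw [← Real.exp_log (show (0:ℝ) < ε/(2*ρy) by positivity), Real.exp_le_exp]
        have e2 : Real.log (ε/(2*ρy)) = - Real.log (2*ρy/ε) := by
          rw [Real.log_div hε0.ne' (by positivity), Real.log_div (by positivity) hε0.ne']
          ring
        rw [e2]
        linarith
      rw [e1]
      calc 2*(Real.exp (-((k:ℝ)*L)) * ρy) = (2*ρy) * Real.exp (-((k:ℝ)*L)) := by ring
        _ ≤ (2*ρy) * (ε/(2*ρy)) := mul_le_mul_of_nonneg_left h3 (by positivity)
        _ = ε := by field_simp
    obtain ⟨T, -, hTcov, hTcard⟩ := iterate_cover hδ0 hδ6 hy hρy H k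
    have hN : coverNum S ε ≤ (T.card : ℝ≥0∞) :=
      coverNum_le_of_ball_cover hTcov (by positivity) hrad
    have htop : (coverNum S ε).toReal ≤ (T.card:ℝ) := by
      have := ENNReal.toReal_mono (ENNReal.natCast_ne_top _) hN
      simpa using this
    have hBk : (coverNum S ε).toReal ≤ B^k := htop.trans hTcard
    have h1le : (1:ℝ) ≤ (coverNum S ε).toReal := by
      have hne : coverNum S ε ≠ ⊤ := ne_top_of_le_ne_top (ENNReal.natCast_ne_top _) hN
      have := ENNReal.toReal_mono hne (one_le_coverNum hSne ε)
      simpa using this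
    have hlog : Real.log (coverNum S ε).toReal ≤ (k:ℝ) * Real.log B := by
      calc Real.log (coverNum S ε).toReal ≤ Real.log (B^k) :=
            Real.log_le_log (by linarith) hBk
        _ = (k:ℝ) * Real.log B := by rw [Real.log_pow]
    have e3 : x = (Real.log (2*ρy) - Real.log ε)/L := by
      rw [hx, Real.log_div (by positivity) hε0.ne']
    calc f ε ≤ ((k:ℝ) * Real.log B) / (-Real.log ε) := (div_le_div_iff_of_pos_right hlogε).2 hlog
      _ ≤ ((x+1) * Real.log B)/(-Real.log ε) :=
          (div_le_div_iff_of_pos_right hlogε).2 (mul_le_mul_of_nonneg_right hkx hlogB)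
      _ = ((Real.log (2*ρy) - Real.log ε)/L + 1) * Real.log B / (-Real.log ε) := by rw [← e3]
  set gfun := fun ε : ℝ => ((Real.log (2*ρy) - Real.log ε)/L + 1) * Real.log B / (-Real.log ε) with hg
  set hfun := fun ε : ℝ => Real.log B / L * ((Real.log (2*ρy) + L)/(-Real.log ε) + 1) with hh
  have hneg : Tendsto (fun ε : ℝ => -Real.log ε) (nhdsWithin 0 (Set.Ioi 0)) atTop :=
    tendsto_neg_atBot_atTop.comp Real.tendsto_log_nhdsGT_zero
  have h0 : Tendsto (fun ε : ℝ => (Real.log (2*ρy) + L)/(-Real.log ε))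
      (nhdsWithin 0 (Set.Ioi 0)) (nhds 0) :=
    Filter.Tendsto.div_atTop tendsto_const_nhds hneg
  have h1 : Tendsto hfun (nhdsWithin 0 (Set.Ioi 0)) (nhds (Real.log B / L * (0+1))) :=
    Filter.Tendsto.const_mul _ (h0.add tendsto_const_nhds)
  rw [show Real.log B / L * (0+1) = D by rw [hD]; ring] at h1
  have heq : gfun =ᶠ[nhdsWithin 0 (Set.Ioi 0)] hfun := by
    filter_upwards [Ioo_mem_nhdsGT (show (0:ℝ) < 1 by norm_num)] with ε hε
    have hl : Real.log ε < 0 := Real.log_neg hε.1 hε.2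
    have hl' : Real.log ε ≠ 0 := hl.ne
    have alg : ∀ a b l Lv : ℝ, l ≠ 0 → Lv ≠ 0 →
        ((a - l)/Lv + 1) * b / (-l) = b/Lv * ((a+Lv)/(-l) + 1) := by
      intros a b l Lv h1 h2
      have hinv : l * l⁻¹ = 1 := mul_inv_cancel₀ h1
      have hLv : Lv * Lv⁻¹ = 1 := mul_inv_cancel₀ h2
      simp only [div_eq_mul_inv, inv_neg]
      linear_combination (b * Lv⁻¹) * hinv + (b * l⁻¹) * hLv
    simp only [hg, hh]
    exact alg _ _ _ _ hl' hLpos.ne'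
  have hglim : Tendsto gfun (nhdsWithin 0 (Set.Ioi 0)) (nhds D) := h1.congr' heq.symm
  apply _root_.le_of_forall_pos_le_add
  intro θ hθ
  have hev1 : ∀ᶠ ε in nhdsWithin 0 (Set.Ioi 0), gfun ε < D + θ :=
    hglim.eventually_lt_const (by linarith)
  have hmin : (0:ℝ) < min 1 (2*ρy) := lt_min one_pos (by linarith)
  have hev2 : ∀ᶠ ε in nhdsWithin 0 (Set.Ioi 0), ε ∈ Set.Ioo (0:ℝ) (min 1 (2*ρy)) :=
    Filter.eventually_of_mem (Ioo_mem_nhdsGT hmin) (fun _ h => h)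
  have hub : ∀ᶠ ε in nhdsWithin 0 (Set.Ioi 0), f ε ≤ D + θ := by
    filter_upwards [hev1, hev2] with ε h1' h2'
    exact (key ε h2').trans h1'.le
  have hlb : ∀ᶠ ε in nhdsWithin 0 (Set.Ioi 0), (0:ℝ) ≤ f ε := by
    filter_upwards [hev2] with ε h2'
    have hε1 : ε < 1 := lt_of_lt_of_le h2'.2 (min_le_left _ _)
    have hld : 0 < -Real.log ε := by
      have := Real.log_neg h2'.1 hε1
      linarith
    exact div_nonneg (log_coverNum_nonneg hSne ε) hld.le
  exact Filter.limsup_le_of_le (Filter.isCoboundedUnder_le_of_eventually_le _ hlb) hub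

lemma upperMinkDim_nonneg {n : ℕ} (E : Set (EuclideanSpace ℝ (Fin n))) :
    0 ≤ upperMinkDim E := by
  by_cases h : E = ∅
  · simp [upperMinkDim, h]
  · rw [upperMinkDim, if_neg h, Filter.limsup_eq]
    apply Real.sInf_nonneg
    intro a ha
    simp only [Set.mem_setOf_eq] at ha
    have hne : E.Nonempty := Set.nonempty_iff_ne_empty.2 h
    have hnn : ∀ᶠ ε in nhdsWithin (0:ℝ) (Set.Ioi 0),
        0 ≤ Real.log (coverNum E ε).toReal / (-Real.log ε) := by
      filter_upwards [Ioo_mem_nhdsGT (show (0:ℝ) < 1 by norm_num)] with ε hε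
      have hld : 0 < -Real.log ε := by
        have := Real.log_neg hε.1 hε.2
        linarith
      exact div_nonneg (log_coverNum_nonneg hne ε) hld.le
    obtain ⟨ε, h1, h2⟩ := (ha.and hnn).exists
    linarith

lemma packDim_le {n : ℕ} {A : Set (EuclideanSpace ℝ (Fin n))} {d : ℝ}
    (F : ℕ → Set (EuclideanSpace ℝ (Fin n))) (hU : A = ⋃ i, F i)
    (hb : ∀ i, Bornology.IsBounded (F i)) (hdim : ∀ i, upperMinkDim (F i) ≤ d) :
    packDim A ≤ d := by
  apply csInf_le
  · refine ⟨0, ?_⟩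
    rintro d' ⟨F', -, -, hd'⟩
    exact (upperMinkDim_nonneg (F' 0)).trans (hd' 0)
  · exact ⟨F, hU, hb, hdim⟩

lemma rwRho_top (n : ℕ) (δ : ℝ) (hδ : 0 < δ) (A : Set (EuclideanSpace ℝ (Fin n))) :
    RwRho n δ A := by
  intro y hy
  refine ⟨1, one_pos, fun x hx ρ hρ => ⟨⊤, ?_, ?_⟩⟩
  · simp [finrank_top, finrank_euclideanSpace_fin]
  · intro z hz
    have hzP : z ∈ affPlane x (⊤ : Submodule ℝ (EuclideanSpace ℝ (Fin n))) :=
      by simp [affPlane]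
    have h0 : Metric.infDist z (affPlane x (⊤ : Submodule ℝ (EuclideanSpace ℝ (Fin n)))) ≤ 0 := by
      rw [← dist_self z]
      exact Metric.infDist_le_dist_of_mem hzP
    exact le_trans h0 (by nlinarith [hρ.1])

lemma main_bound (n j : ℕ) (δ : ℝ) (hδ0 : 0 < δ) (hδ6 : δ < 1/6)
    (A : Set (EuclideanSpace ℝ (Fin n))) (hA : RwRho j δ A) :
    packDim A ≤ j + (Real.log ((9*((j:ℝ)+1))^j) + j * Real.log 6) / Real.log (1/(6*δ)) := by
  have hLpos : 0 < Real.log (1/(6*δ)) := Real.log_pos (by rw [lt_div_iff₀ (by linarith)]; linarith)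
  have hg0 : 0 ≤ (Real.log ((9*((j:ℝ)+1))^j) + j * Real.log 6) / Real.log (1/(6*δ)) := by
    apply div_nonneg _ hLpos.le
    have h1 : 0 ≤ Real.log ((9*((j:ℝ)+1))^j) := by
      apply Real.log_nonneg
      apply one_le_pow₀
      nlinarith [Nat.cast_nonneg (α := ℝ) j]
    have h2 : 0 ≤ Real.log 6 := Real.log_nonneg (by norm_num)
    positivity
  by_cases hAe : A = ∅
  · subst hAe
    apply packDim_le (fun _ => ∅)
    · simp
    · intro i; exact Bornology.isBounded_empty
    · intro i
      rw [upperMinkDim, if_pos rfl]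
      positivity
  · choose! ρfun h1 h2 using hA
    obtain ⟨t, htA, htc, htcov⟩ := TopologicalSpace.countable_cover_nhdsWithin
      (f := fun y => Metric.closedBall y (ρfun y)) (s := A)
      (fun y hy => mem_nhdsWithin_of_mem_nhds (Metric.closedBall_mem_nhds y (h1 y hy)))
    have htne : t.Nonempty := by
      rcases Set.eq_empty_or_nonempty t with rfl | h
      · simp only [Set.mem_empty_iff_false, Set.iUnion_of_empty, Set.iUnion_empty,
          Set.subset_empty_iff] at htcov
        exact absurd htcov hAe
      · exact h
    obtain ⟨e, he⟩ := Set.Countable.exists_eq_range htc htne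
    set F : ℕ → Set (EuclideanSpace ℝ (Fin n)) :=
      fun i => A ∩ Metric.closedBall (e i) (ρfun (e i)) with hF
    have heA : ∀ i, e i ∈ A := by
      intro i
      apply htA
      rw [he]
      exact Set.mem_range_self i
    apply packDim_le F
    · apply Set.Subset.antisymm
      · intro a ha
        obtain ⟨yb, hyb, hab⟩ := mem_iUnion₂.1 (htcov ha)
        rw [he] at hyb
        obtain ⟨i, rfl⟩ := hyb
        exact Set.mem_iUnion.2 ⟨i, ha, hab⟩
      · intro a ha
        obtain ⟨i, hi⟩ := Set.mem_iUnion.1 ha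
        exact hi.1
    · intro i
      exact Metric.isBounded_closedBall.subset Set.inter_subset_right
    · intro i
      exact piece_dim hδ0 hδ6 (heA i) (h1 _ (heA i)) (h2 _ (heA i))


/-- there is a function `η` with `η(t) → 0` as `t → 0⁺` such that any
set with the weak `ρ_y`-uniform `δ₁`-approximation property has packing dimension at
most `j + η δ₁`. -/
theorem packing_dim_bound (n j : ℕ) (hj : j ≤ n) :
    ∃ η : ℝ → ℝ, Filter.Tendsto η (nhdsWithin 0 (Set.Ioi 0)) (nhds 0) ∧
      ∀ δ₁ ∈ Set.Ioo (0:ℝ) 1, ∀ A : Set (EuclideanSpace ℝ (Fin n)),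
        RwRho j δ₁ A → packDim A ≤ (j : ℝ) + η δ₁ := by
  set K1 : ℝ := Real.log ((9*((j:ℝ)+1))^j) + j * Real.log 6 with hK1
  set K2 : ℝ := ((n:ℝ) - (j:ℝ)) +
    (Real.log ((9*((n:ℝ)+1))^n) + n * Real.log 6) / Real.log (1/(6*(1/24 : ℝ))) with hK2
  refine ⟨fun δ => if δ < 1/12 then K1 / Real.log (1/(6*δ)) else K2, ?_, ?_⟩
  · have hlim : Filter.Tendsto (fun δ : ℝ => K1 / Real.log (1/(6*δ)))
        (nhdsWithin 0 (Set.Ioi 0)) (nhds 0) := by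
      apply Filter.Tendsto.div_atTop tendsto_const_nhds
      have e : (fun δ : ℝ => Real.log (1/(6*δ))) = (fun δ : ℝ => -Real.log (6*δ)) := by
        funext δ
        rw [one_div, Real.log_inv]
      rw [e]
      apply tendsto_neg_atBot_atTop.comp
      apply Real.tendsto_log_nhdsGT_zero.comp
      apply tendsto_nhdsWithin_of_tendsto_nhds_of_eventually_within
      · have : Filter.Tendsto (fun δ : ℝ => 6*δ) (nhdsWithin 0 (Set.Ioi 0)) (nhds (6*0)) :=
          (Filter.Tendsto.const_mul _ (tendsto_id.mono_left nhdsWithin_le_nhds))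
        simpa using this
      · filter_upwards [self_mem_nhdsWithin] with δ hδ
        have : (0:ℝ) < δ := hδ
        exact Set.mem_Ioi.2 (by linarith)
    apply hlim.congr'
    filter_upwards [Ioo_mem_nhdsGT (show (0:ℝ) < 1/12 by norm_num)] with δ hδ
    rw [if_pos hδ.2]
  · intro δ₁ hδ₁ A hA
    simp only []
    by_cases hc : δ₁ < 1/12
    · rw [if_pos hc]
      exact main_bound n j δ₁ hδ₁.1 (by linarith) A hA
    · rw [if_neg hc]
      have hb := main_bound n n (1/24) (by norm_num) (by norm_num) A
        (rwRho_top n (1/24) (by norm_num) A)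
      rw [hK2]
      have hjn : (j:ℝ) ≤ (n:ℝ) := by exact_mod_cast hj
      linarith


end ReifenbergPaper
end
end

section
/- Let n ∈ ℕ, j ≤ n, let L ⊆ ℝⁿ be a j-dimensional linear subspace, let g : L → L^⊥ be Lipschitz with Lipschitz constant M, let G := graph(g) = {x + g(x) : x ∈ L}, and let p ∈ G. Then for every ρ > 0, H^j(B_ρ(p) ∩ G) ≥ κ_j · (ρ/√(1+M²))^j, where H^j denotes j-dimensional Hausdorff measure on ℝⁿ and κ_j := H^j of the closed unit ball in ℝ^j. -/
open Metric Set MeasureTheory ENNReal NNReal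

attribute [local instance] Classical.propDecidable

noncomputable section

namespace ReifenbergPaper

open scoped RealInnerProductSpace Pointwise

/-- lower Hausdorff-measure bound on balls of a Lipschitz graph:
`H^j(B_ρ(p) ∩ G) ≥ κ_j (ρ/√(1+M²))^j` where `κ_j` is the `H^j` measure of the
closed unit ball of `ℝ^j`. -/
theorem hausdorff_lower_bound_on_graph (n j : ℕ) (hj : j ≤ n)
    (W : Submodule ℝ (EuclideanSpace ℝ (Fin n))) (hW : Module.finrank ℝ W = j)
    (M : ℝ≥0) (g : W → Wᗮ) (hg : LipschitzWith M g)
    (p : EuclideanSpace ℝ (Fin n)) (hp : p ∈ lipGraph W g) (ρ : ℝ) (hρ : 0 < ρ) :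
    μH[(j : ℝ)] (Metric.closedBall (0 : EuclideanSpace ℝ (Fin j)) 1) *
        ENNReal.ofReal ((ρ / Real.sqrt (1 + (M : ℝ) ^ 2)) ^ j) ≤
      μH[(j : ℝ)] (Metric.closedBall p ρ ∩ lipGraph W g) := by
  obtain ⟨x₀, rfl⟩ := hp
  set K : ℝ := Real.sqrt (1 + (M : ℝ) ^ 2) with hKdef
  have hKsq : K ^ 2 = 1 + (M : ℝ) ^ 2 := Real.sq_sqrt (by positivity)
  have hK1 : 1 ≤ K := by nlinarith [Real.sqrt_nonneg (1 + (M : ℝ) ^ 2)]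
  have hKpos : (0 : ℝ) < K := lt_of_lt_of_le one_pos hK1
  set r : ℝ := ρ / K with hrdef
  have hr : 0 < r := div_pos hρ hKpos
  -- isometry from ℝ^j onto W
  let e : EuclideanSpace ℝ (Fin j) ≃ₗᵢ[ℝ] W :=
    ((stdOrthonormalBasis ℝ W).reindex (finCongr hW)).repr.symm
  let f : EuclideanSpace ℝ (Fin j) → EuclideanSpace ℝ (Fin n) :=
    fun v => (e v : EuclideanSpace ℝ (Fin n)) + (g (e v) : EuclideanSpace ℝ (Fin n))
  -- key Pythagoras identity
  have hnorm : ∀ x y : W,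
      ‖((x : EuclideanSpace ℝ (Fin n)) + (g x : EuclideanSpace ℝ (Fin n))) -
        ((y : EuclideanSpace ℝ (Fin n)) + (g y : EuclideanSpace ℝ (Fin n)))‖ ^ 2 =
      ‖x - y‖ ^ 2 + ‖g x - g y‖ ^ 2 := by
    intro x y
    have hrw : ((x : EuclideanSpace ℝ (Fin n)) + (g x : EuclideanSpace ℝ (Fin n))) -
        ((y : EuclideanSpace ℝ (Fin n)) + (g y : EuclideanSpace ℝ (Fin n))) =
        ((x - y : W) : EuclideanSpace ℝ (Fin n)) +
        ((g x - g y : Wᗮ) : EuclideanSpace ℝ (Fin n)) := by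
      push_cast; abel
    have hin : (inner ℝ ((x - y : W) : EuclideanSpace ℝ (Fin n))
        ((g x - g y : Wᗮ) : EuclideanSpace ℝ (Fin n)) : ℝ) = 0 :=
      Submodule.inner_right_of_mem_orthogonal (x - y).2 (g x - g y).2
    rw [hrw, norm_add_sq_real, hin]
    simp
  have hantilip : AntilipschitzWith 1 f := by
    refine AntilipschitzWith.of_le_mul_dist fun v w => ?_
    have h1 : dist v w = ‖e v - e w‖ := by
      rw [← e.dist_map v w, dist_eq_norm]
    have h2 := hnorm (e v) (e w)
    have h3 : (0:ℝ) ≤ ‖f v - f w‖ := norm_nonneg _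
    have h4 : ‖g (e v) - g (e w)‖ ^ 2 ≥ 0 := sq_nonneg _
    have h5 : ‖e v - e w‖ ≤ ‖f v - f w‖ := by nlinarith [norm_nonneg (e v - e w)]
    rw [NNReal.coe_one, one_mul, h1, dist_eq_norm]
    exact h5
  set v₀ : EuclideanSpace ℝ (Fin j) := e.symm x₀ with hv₀
  have hev₀ : e v₀ = x₀ := e.apply_symm_apply x₀
  -- image of the small ball lands in the big ball ∩ graph
  have himg : f '' Metric.closedBall v₀ r ⊆
      Metric.closedBall ((x₀ : EuclideanSpace ℝ (Fin n)) +
        (g x₀ : EuclideanSpace ℝ (Fin n))) ρ ∩ lipGraph W g := by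
    rintro _ ⟨v, hv, rfl⟩
    constructor
    · rw [Metric.mem_closedBall, dist_eq_norm]
      have hd : ‖e v - x₀‖ ≤ r := by
        rw [← hev₀, ← dist_eq_norm (e v) (e v₀)]
        rw [e.dist_map v v₀] at *
        exact hv
      have hgb : ‖g (e v) - g x₀‖ ≤ (M : ℝ) * ‖e v - x₀‖ := by
        have := hg.dist_le_mul (e v) x₀
        rwa [dist_eq_norm, dist_eq_norm] at this
      have h2 := hnorm (e v) x₀
      have hρr : K * r = ρ := by
        rw [hrdef]; field_simp
      have hsq : ‖f v - ((x₀ : EuclideanSpace ℝ (Fin n)) +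
          (g x₀ : EuclideanSpace ℝ (Fin n)))‖ ^ 2 ≤ ρ ^ 2 := by
        have hen : (0:ℝ) ≤ ‖e v - x₀‖ := norm_nonneg _
        have hgn : (0:ℝ) ≤ ‖g (e v) - g x₀‖ := norm_nonneg _
        have hM : (0:ℝ) ≤ (M:ℝ) := M.coe_nonneg
        calc ‖f v - ((x₀ : EuclideanSpace ℝ (Fin n)) +
              (g x₀ : EuclideanSpace ℝ (Fin n)))‖ ^ 2
            = ‖e v - x₀‖ ^ 2 + ‖g (e v) - g x₀‖ ^ 2 := h2
          _ ≤ (1 + (M:ℝ)^2) * r ^ 2 := by nlinarith [mul_le_mul hgb hgb hgn (by positivity : (0:ℝ) ≤ (M:ℝ)*‖e v - x₀‖), mul_le_mul hd hd hen hr.le]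
          _ = ρ ^ 2 := by rw [← hKsq, ← hρr]; ring
      nlinarith [norm_nonneg (f v - ((x₀ : EuclideanSpace ℝ (Fin n)) +
          (g x₀ : EuclideanSpace ℝ (Fin n))))]
    · exact ⟨e v, rfl⟩
  -- measure computations
  have hball : μH[(j:ℝ)] (Metric.closedBall v₀ r) =
      μH[(j:ℝ)] (Metric.closedBall (0 : EuclideanSpace ℝ (Fin j)) 1) *
        ENNReal.ofReal (r ^ j) := by
    have ht : Metric.closedBall v₀ r = v₀ +ᵥ Metric.closedBall (0 : EuclideanSpace ℝ (Fin j)) r := by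
      rw [vadd_closedBall, vadd_eq_add, add_zero]
    have hs : Metric.closedBall (0 : EuclideanSpace ℝ (Fin j)) r =
        r • Metric.closedBall (0 : EuclideanSpace ℝ (Fin j)) 1 := by
      rw [_root_.smul_closedBall _ _ zero_le_one, smul_zero, Real.norm_of_nonneg hr.le, mul_one]
    rw [ht, hausdorffMeasure_vadd _ (Or.inl (by positivity : (0:ℝ) ≤ (j:ℝ))), hs,
      Measure.hausdorffMeasure_smul₀ (by positivity : (0:ℝ) ≤ (j:ℝ)) hr.ne' ]
    rw [ENNReal.smul_def, mul_comm]
    congr 1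
    rw [NNReal.rpow_natCast, ENNReal.coe_pow, ENNReal.ofReal_pow hr.le]
    congr 1
    simp only [ENNReal.ofReal, Real.nnnorm_of_nonneg hr.le]
    exact congrArg _ (NNReal.coe_injective (by simp [Real.coe_toNNReal _ hr.le]))
  calc μH[(j:ℝ)] (Metric.closedBall (0 : EuclideanSpace ℝ (Fin j)) 1) *
        ENNReal.ofReal (r ^ j)
      = μH[(j:ℝ)] (Metric.closedBall v₀ r) := hball.symm
    _ ≤ (1 : ℝ≥0∞) ^ (j:ℝ) * μH[(j:ℝ)] (f '' Metric.closedBall v₀ r) :=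
        hantilip.le_hausdorffMeasure_image (by positivity) _
    _ = μH[(j:ℝ)] (f '' Metric.closedBall v₀ r) := by rw [ENNReal.one_rpow, one_mul]
    _ ≤ μH[(j:ℝ)] (Metric.closedBall ((x₀ : EuclideanSpace ℝ (Fin n)) +
          (g x₀ : EuclideanSpace ℝ (Fin n))) ρ ∩ lipGraph W g) := measure_mono himg


end ReifenbergPaper
end
end

section
/- Let n ∈ ℕ, j ≤ n and M > 0. There exists a constant C = C(M,j) > 0 such that for every j-dimensional linear subspace L ⊆ ℝⁿ, every Lipschitz function g : L → L^⊥ with Lipschitz constant M, and every set A ⊆ graph(g) with H^j(A) < ∞, one has P^j(A) ≤ C · H^j(A), where P^j is j-dimensional packing measure and H^j is j-dimensional Hausdorff measure. -/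
open Metric Set MeasureTheory ENNReal NNReal

attribute [local instance] Classical.propDecidable

noncomputable section

namespace ReifenbergPaper

/-! ### Auxiliary lemmas for Statement 17 -/

open Module RealInnerProductSpace in
private lemma euclid_ball_bounds' (j : ℕ) :
    ∃ c C : ℝ≥0∞, 0 < c ∧ c < ⊤ ∧ C < ⊤ ∧
      ∀ (z : EuclideanSpace ℝ (Fin j)) (ρ : ℝ), 0 ≤ ρ →
        c * (ENNReal.ofReal ρ) ^ j ≤ μH[(j : ℝ)] (Metric.closedBall z ρ) ∧
        μH[(j : ℝ)] (Metric.closedBall z ρ) ≤ C * (ENNReal.ofReal ρ) ^ j := by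
  set T : EuclideanSpace ℝ (Fin j) ≃L[ℝ] (Fin j → ℝ) :=
    (WithLp.linearEquiv 2 ℝ (Fin j → ℝ)).toContinuousLinearEquiv with hTdef
  set κ : ℝ≥0 := ‖(T : EuclideanSpace ℝ (Fin j) →L[ℝ] (Fin j → ℝ))‖₊ +
    ‖(T.symm : (Fin j → ℝ) →L[ℝ] EuclideanSpace ℝ (Fin j))‖₊ + 1 with hκdef
  have hκ1 : (1:ℝ≥0) ≤ κ := le_add_self
  have hκ0 : (0:ℝ) < (κ:ℝ) := by exact_mod_cast lt_of_lt_of_le zero_lt_one hκ1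
  have hT : LipschitzWith κ (T : EuclideanSpace ℝ (Fin j) → (Fin j → ℝ)) :=
    ((T : EuclideanSpace ℝ (Fin j) →L[ℝ] (Fin j → ℝ)).lipschitz).weaken
      (le_add_right le_self_add)
  have hTs : LipschitzWith κ (T.symm : (Fin j → ℝ) → EuclideanSpace ℝ (Fin j)) :=
    ((T.symm : (Fin j → ℝ) →L[ℝ] EuclideanSpace ℝ (Fin j)).lipschitz).weaken
      (le_add_right le_add_self)
  have hpi : (μH[(j : ℝ)] : Measure (Fin j → ℝ)) = volume := by
    simpa [Fintype.card_fin] using hausdorffMeasure_pi_real (ι := Fin j)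
  refine ⟨(ENNReal.ofReal (2 / (κ*κ)))^j, ((κ:ℝ≥0∞) * ENNReal.ofReal (2*(κ:ℝ)))^j,
    ?_, ?_, ?_, ?_⟩
  · exact ENNReal.pow_pos (ENNReal.ofReal_pos.2 (by positivity)) _
  · exact ENNReal.pow_lt_top ENNReal.ofReal_lt_top
  · exact ENNReal.pow_lt_top (ENNReal.mul_lt_top ENNReal.coe_lt_top ENNReal.ofReal_lt_top)
  intro z ρ hρ
  constructor
  · -- lower bound
    have hsub : Metric.closedBall (T z) (ρ/κ) ⊆ (T : EuclideanSpace ℝ (Fin j) → _) ''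
        Metric.closedBall z ρ := by
      intro y hy
      refine ⟨T.symm y, ?_, T.apply_symm_apply y⟩
      rw [Metric.mem_closedBall] at hy ⊢
      calc dist (T.symm y) z = dist (T.symm y) (T.symm (T z)) := by rw [T.symm_apply_apply]
        _ ≤ κ * dist y (T z) := hTs.dist_le_mul _ _
        _ ≤ κ * (ρ/κ) := by
            exact mul_le_mul_of_nonneg_left hy (by positivity)
        _ = ρ := by field_simp
    have h1 : ENNReal.ofReal ((2*(ρ/κ))^j) ≤ (κ:ℝ≥0∞)^j * μH[(j : ℝ)] (Metric.closedBall z ρ) := by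
      calc ENNReal.ofReal ((2*(ρ/κ))^j)
          = volume (Metric.closedBall (T z) (ρ/κ)) := by
            simpa [Fintype.card_fin] using (Real.volume_pi_closedBall (T z) (by positivity : (0:ℝ) ≤ ρ/κ)).symm
        _ = μH[(j : ℝ)] (Metric.closedBall (T z) (ρ/κ)) := by rw [hpi]
        _ ≤ μH[(j : ℝ)] ((T : EuclideanSpace ℝ (Fin j) → _) '' Metric.closedBall z ρ) :=
            measure_mono hsub
        _ ≤ (κ:ℝ≥0∞)^(j:ℝ) * μH[(j : ℝ)] (Metric.closedBall z ρ) :=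
            hT.hausdorffMeasure_image_le (by positivity) _
        _ = (κ:ℝ≥0∞)^j * μH[(j : ℝ)] (Metric.closedBall z ρ) := by
            rw [ENNReal.rpow_natCast]
    have hκe0 : ((κ:ℝ≥0∞))^j ≠ 0 := pow_ne_zero _ (by exact_mod_cast (lt_of_lt_of_le zero_lt_one hκ1).ne')
    have hκeT : ((κ:ℝ≥0∞))^j ≠ ⊤ := ENNReal.pow_ne_top ENNReal.coe_ne_top
    rw [← ENNReal.mul_le_mul_iff_right hκe0 hκeT]
    have heq : (κ:ℝ≥0∞)^j * ((ENNReal.ofReal (2/(κ*κ)))^j * (ENNReal.ofReal ρ)^j)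
        = ENNReal.ofReal ((2*(ρ/κ))^j) := by
      rw [← mul_pow, ← mul_pow, ← ENNReal.ofReal_coe_nnreal,
        ← ENNReal.ofReal_mul (by positivity), ← ENNReal.ofReal_mul (by positivity),
        ← ENNReal.ofReal_pow (by positivity)]
      congr 2
      field_simp
    rw [heq]
    exact h1
  · -- upper bound
    have hsub2 : Metric.closedBall z ρ ⊆ (T.symm : (Fin j → ℝ) → _) ''
        Metric.closedBall (T z) (κ*ρ) := by
      intro x hx
      refine ⟨T x, ?_, T.symm_apply_apply x⟩
      rw [Metric.mem_closedBall] at hx ⊢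
      calc dist (T x) (T z) ≤ κ * dist x z := hT.dist_le_mul _ _
        _ ≤ κ * ρ := mul_le_mul_of_nonneg_left hx (by positivity)
    calc μH[(j : ℝ)] (Metric.closedBall z ρ)
        ≤ μH[(j : ℝ)] ((T.symm : (Fin j → ℝ) → _) '' Metric.closedBall (T z) (κ*ρ)) :=
          measure_mono hsub2
      _ ≤ (κ:ℝ≥0∞)^(j:ℝ) * μH[(j : ℝ)] (Metric.closedBall (T z) (κ*ρ)) :=
          hTs.hausdorffMeasure_image_le (by positivity) _
      _ = (κ:ℝ≥0∞)^j * volume (Metric.closedBall (T z) (κ*ρ)) := by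
          rw [ENNReal.rpow_natCast, hpi]
      _ = (κ:ℝ≥0∞)^j * ENNReal.ofReal ((2*((κ:ℝ)*ρ))^j) := by
          rw [show volume (Metric.closedBall (T z) (κ*ρ)) = ENNReal.ofReal ((2*((κ:ℝ)*ρ))^j) by
            simpa [Fintype.card_fin] using Real.volume_pi_closedBall (T z) (by positivity : (0:ℝ) ≤ κ*ρ)]
      _ = ((κ:ℝ≥0∞) * ENNReal.ofReal (2*(κ:ℝ)))^j * (ENNReal.ofReal ρ)^j := by
          have h5 : ((κ:ℝ≥0∞) * ENNReal.ofReal (2*(κ:ℝ)))^j * (ENNReal.ofReal ρ)^j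
              = (κ:ℝ≥0∞)^j * ENNReal.ofReal ((2*((κ:ℝ)*ρ))^j) := by
            rw [mul_pow, mul_assoc, ← mul_pow, ← ENNReal.ofReal_mul (by positivity),
              ← ENNReal.ofReal_pow (by positivity)]
            congr 2
            ring
          rw [h5]

open Module RealInnerProductSpace in
private lemma lipGraph_measure_bounds' {n j : ℕ} (M : ℝ≥0)
    (W : Submodule ℝ (EuclideanSpace ℝ (Fin n))) (hW : finrank ℝ W = j)
    (g : W → Wᗮ) (hg : LipschitzWith M g) (c C : ℝ≥0∞)
    (hball : ∀ (z : EuclideanSpace ℝ (Fin j)) (ρ : ℝ), 0 ≤ ρ →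
        c * (ENNReal.ofReal ρ) ^ j ≤ μH[(j : ℝ)] (Metric.closedBall z ρ) ∧
        μH[(j : ℝ)] (Metric.closedBall z ρ) ≤ C * (ENNReal.ofReal ρ) ^ j) :
    IsClosed (lipGraph W g) ∧
    (∀ x ∈ lipGraph W g, ∀ r : ℝ, 0 ≤ r →
      c * (ENNReal.ofReal (1/(1+(M:ℝ))))^j * (ENNReal.ofReal r)^j
        ≤ μH[(j : ℝ)] (lipGraph W g ∩ Metric.closedBall x r)) ∧
    (∀ (x : EuclideanSpace ℝ (Fin n)) (r : ℝ), 0 ≤ r →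
      μH[(j : ℝ)] (lipGraph W g ∩ Metric.closedBall x r)
        ≤ ((1+M : ℝ≥0) : ℝ≥0∞)^j * C * (ENNReal.ofReal r)^j) := by
  classical
  set E := EuclideanSpace ℝ (Fin n)
  have hMpos : (0:ℝ) < 1 + (M:ℝ) := by positivity
  let o : W ≃ₗᵢ[ℝ] EuclideanSpace ℝ (Fin j) :=
    ((stdOrthonormalBasis ℝ W).reindex (finCongr hW)).repr
  set Φ : EuclideanSpace ℝ (Fin j) → E :=
    fun v => ((o.symm v : W) : E) + ((g (o.symm v) : Wᗮ) : E) with hΦdef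
  have hrange : lipGraph W g = Set.range Φ := by
    ext p
    constructor
    · rintro ⟨x, rfl⟩
      exact ⟨o x, by simp [hΦdef]⟩
    · rintro ⟨v, rfl⟩
      exact ⟨o.symm v, rfl⟩
  have hΦlip : LipschitzWith (1 + M) Φ := by
    refine LipschitzWith.of_dist_le_mul fun v v' => ?_
    have h1 : Φ v - Φ v' = (((o.symm v : W) : E) - ((o.symm v' : W) : E))
        + (((g (o.symm v) : Wᗮ) : E) - ((g (o.symm v') : Wᗮ) : E)) := by
      simp only [hΦdef]; abel
    have h2 : ‖((o.symm v : W) : E) - ((o.symm v' : W) : E)‖ = dist v v' := by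
      rw [← Submodule.coe_sub, ← Submodule.coe_norm, ← dist_eq_norm, o.symm.dist_map]
    have h3 : ‖((g (o.symm v) : Wᗮ) : E) - ((g (o.symm v') : Wᗮ) : E)‖ ≤ M * dist v v' := by
      rw [← Submodule.coe_sub, ← Submodule.coe_norm, ← dist_eq_norm]
      calc dist (g (o.symm v)) (g (o.symm v')) ≤ M * dist (o.symm v) (o.symm v') :=
            hg.dist_le_mul _ _
        _ = M * dist v v' := by rw [o.symm.dist_map]
    calc dist (Φ v) (Φ v') = ‖Φ v - Φ v'‖ := dist_eq_norm _ _
      _ ≤ ‖((o.symm v : W) : E) - ((o.symm v' : W) : E)‖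
          + ‖((g (o.symm v) : Wᗮ) : E) - ((g (o.symm v') : Wᗮ) : E)‖ := by
          rw [h1]; exact norm_add_le _ _
      _ ≤ dist v v' + M * dist v v' := by rw [h2]; exact add_le_add_right h3 _
      _ = (1 + M : ℝ≥0) * dist v v' := by push_cast; ring
  have hΦanti : AntilipschitzWith 1 Φ := by
    refine AntilipschitzWith.of_le_mul_dist fun v v' => ?_
    have h1 : Φ v - Φ v' = (((o.symm v : W) : E) - ((o.symm v' : W) : E))
        + (((g (o.symm v) : Wᗮ) : E) - ((g (o.symm v') : Wᗮ) : E)) := by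
      simp only [hΦdef]; abel
    set a : E := ((o.symm v : W) : E) - ((o.symm v' : W) : E) with ha
    set b : E := ((g (o.symm v) : Wᗮ) : E) - ((g (o.symm v') : Wᗮ) : E) with hb
    have hinner : (inner ℝ a b : ℝ) = 0 :=
      Submodule.inner_right_of_mem_orthogonal
        (Submodule.sub_mem _ (SetLike.coe_mem _) (SetLike.coe_mem _))
        (Submodule.sub_mem _ (SetLike.coe_mem _) (SetLike.coe_mem _))
    have hpyth := norm_add_sq_real a b
    have hanorm : ‖a‖ ≤ ‖a + b‖ := by
      nlinarith [norm_nonneg (a+b), norm_nonneg a, norm_nonneg b, sq_nonneg ‖b‖]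
    have h2 : dist v v' = ‖a‖ := by
      rw [ha, ← Submodule.coe_sub, ← Submodule.coe_norm, ← dist_eq_norm, o.symm.dist_map]
    calc dist v v' = ‖a‖ := h2
      _ ≤ ‖a + b‖ := hanorm
      _ = dist (Φ v) (Φ v') := by rw [← h1, ← dist_eq_norm]
      _ = (1:ℝ≥0) * dist (Φ v) (Φ v') := by rw [NNReal.coe_one, one_mul]
  have hclosed : IsClosed (lipGraph W g) := by
    rw [hrange]
    exact hΦanti.isClosed_range hΦlip.uniformContinuous
  refine ⟨hclosed, ?_, ?_⟩
  · -- lower bound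
    intro x hx r hr
    rw [hrange] at hx
    obtain ⟨u, rfl⟩ := hx
    set r' : ℝ := r / (1 + (M:ℝ)) with hr'
    have hr'0 : 0 ≤ r' := by positivity
    have hsub : Φ '' Metric.closedBall u r' ⊆ lipGraph W g ∩ Metric.closedBall (Φ u) r := by
      rintro _ ⟨v, hv, rfl⟩
      refine ⟨hrange ▸ Set.mem_range_self v, ?_⟩
      rw [Metric.mem_closedBall] at hv ⊢
      calc dist (Φ v) (Φ u) ≤ (1 + M : ℝ≥0) * dist v u := hΦlip.dist_le_mul _ _
        _ ≤ (1 + (M:ℝ)) * r' := by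
            push_cast
            exact mul_le_mul_of_nonneg_left hv (by positivity)
        _ = r := by rw [hr']; field_simp
    have hlow := (hball u r' hr'0).1
    have h4 : μH[(j : ℝ)] (Metric.closedBall u r')
        ≤ μH[(j : ℝ)] (lipGraph W g ∩ Metric.closedBall (Φ u) r) := by
      calc μH[(j : ℝ)] (Metric.closedBall u r')
          ≤ ((1:ℝ≥0) : ℝ≥0∞)^(j:ℝ) * μH[(j : ℝ)] (Φ '' Metric.closedBall u r') :=
            hΦanti.le_hausdorffMeasure_image (by positivity) _
        _ = μH[(j : ℝ)] (Φ '' Metric.closedBall u r') := by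
            rw [ENNReal.coe_one, ENNReal.one_rpow, one_mul]
        _ ≤ μH[(j : ℝ)] (lipGraph W g ∩ Metric.closedBall (Φ u) r) := measure_mono hsub
    refine le_trans ?_ (hlow.trans h4)
    have heq : ENNReal.ofReal (1/(1+(M:ℝ))) * ENNReal.ofReal r = ENNReal.ofReal r' := by
      rw [← ENNReal.ofReal_mul (by positivity), hr']
      congr 1
      field_simp
    rw [mul_assoc, ← mul_pow, heq]
  · -- upper bound
    intro x r hr
    set P := Submodule.orthogonalProjectionOnto W
    have hproj : ∀ v : EuclideanSpace ℝ (Fin j), P (Φ v) = o.symm v := by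
      intro v
      rw [hΦdef]
      simp only
      rw [map_add, Submodule.orthogonalProjectionOnto_mem_subspace_eq_self,
        Submodule.orthogonalProjectionOnto_apply_of_mem_orthogonal (SetLike.coe_mem _),
        add_zero]
    have hsub : lipGraph W g ∩ Metric.closedBall x r ⊆ Φ '' Metric.closedBall (o (P x)) r := by
      rintro p ⟨hpG, hpB⟩
      rw [hrange] at hpG
      obtain ⟨v, rfl⟩ := hpG
      refine ⟨v, ?_, rfl⟩
      rw [Metric.mem_closedBall]
      have h5 : v = o (P (Φ v)) := by rw [hproj]; rw [o.apply_symm_apply]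
      calc dist v (o (P x)) = dist (o (P (Φ v))) (o (P x)) := by rw [← h5]
        _ = dist (P (Φ v)) (P x) := o.dist_map _ _
        _ = ‖(P (Φ v) - P x : W)‖ := dist_eq_norm _ _
        _ = ‖P (Φ v - x)‖ := by rw [map_sub]
        _ ≤ ‖P‖ * ‖Φ v - x‖ := (P : E →L[ℝ] W).le_opNorm _
        _ ≤ 1 * ‖Φ v - x‖ := by
            exact mul_le_mul_of_nonneg_right (Submodule.orthogonalProjectionOnto_norm_le W) (norm_nonneg _)
        _ = dist (Φ v) x := by rw [one_mul, dist_eq_norm]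
        _ ≤ r := hpB
    calc μH[(j : ℝ)] (lipGraph W g ∩ Metric.closedBall x r)
        ≤ μH[(j : ℝ)] (Φ '' Metric.closedBall (o (P x)) r) := measure_mono hsub
      _ ≤ ((1+M : ℝ≥0) : ℝ≥0∞)^(j:ℝ) * μH[(j : ℝ)] (Metric.closedBall (o (P x)) r) :=
          hΦlip.hausdorffMeasure_image_le (by positivity) _
      _ ≤ ((1+M : ℝ≥0) : ℝ≥0∞)^j * (C * (ENNReal.ofReal r)^j) := by
          rw [ENNReal.rpow_natCast]
          exact mul_le_mul_right (hball _ r hr).2 _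
      _ = ((1+M : ℝ≥0) : ℝ≥0∞)^j * C * (ENNReal.ofReal r)^j := by rw [mul_assoc]

private lemma packPre_empty' {n : ℕ} {s : ℕ} {η : ℝ} :
    packPre (n := n) s η ∅ = 0 := by
  refine le_antisymm ?_ zero_le
  refine iSup₂_le fun D hD => ?_
  have hDe : D = ∅ := Set.eq_empty_iff_forall_notMem.2 fun p hp => (hD.2.1 p hp).1
  subst hDe
  rw [tsum_empty]

private lemma packPre0_empty' {n : ℕ} {s : ℕ} : packPre0 (n := n) s ∅ = 0 :=
  le_antisymm ((iInf₂_le 1 one_pos).trans_eq packPre_empty') zero_le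

private lemma packMeasure_empty' {n : ℕ} {s : ℕ} : packMeasure (n := n) s ∅ = 0 := by
  refine le_antisymm ?_ zero_le
  refine (iInf₂_le (fun _ => ∅) (by simp)).trans ?_
  simp [packPre0_empty']

/-- there is `C = C(M,j) > 0` such that for any Lipschitz graph over a
`j`-dimensional plane with Lipschitz constant `M` and any subset `A` of the graph of
finite `H^j` measure, `P^j(A) ≤ C · H^j(A)`. -/
theorem pack_le_const_mul_hausdorff_on_graph (n j : ℕ) (hj : j ≤ n) (M : ℝ≥0)
    (hM : 0 < M) :
    ∃ C : ℝ, 0 < C ∧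
      ∀ W : Submodule ℝ (EuclideanSpace ℝ (Fin n)), Module.finrank ℝ W = j →
        ∀ g : W → Wᗮ, LipschitzWith M g →
          ∀ A : Set (EuclideanSpace ℝ (Fin n)), A ⊆ lipGraph W g →
            μH[(j : ℝ)] A < ⊤ →
            packMeasure j A ≤ ENNReal.ofReal C * μH[(j : ℝ)] A := by
  classical
  obtain ⟨c, Ce, hc0, hcT, hCeT, hball⟩ := euclid_ball_bounds' j
  set c1 : ℝ≥0∞ := c * (ENNReal.ofReal (1/(1+(M:ℝ))))^j with hc1def
  have hc10 : 0 < c1 := by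
    refine ENNReal.mul_pos hc0.ne' ?_
    exact (ENNReal.pow_pos (ENNReal.ofReal_pos.2 (by positivity)) _).ne'
  have hc1T : c1 < ⊤ := ENNReal.mul_lt_top hcT (ENNReal.pow_lt_top ENNReal.ofReal_lt_top)
  set K : ℝ≥0∞ := 2^(j+1) * c1⁻¹ + 1 with hKdef
  have hK0 : K ≠ 0 := by
    rw [hKdef]
    simp
  have hKT : K ≠ ⊤ := by
    have h2T : (2:ℝ≥0∞)^(j+1) ≠ ⊤ := ENNReal.pow_ne_top (by norm_num)
    have hinvT : c1⁻¹ ≠ ⊤ := ENNReal.inv_ne_top.2 hc10.ne'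
    rw [hKdef]
    exact ENNReal.add_ne_top.2 ⟨ENNReal.mul_ne_top h2T hinvT, ENNReal.one_ne_top⟩
  refine ⟨K.toReal + 1, by positivity, ?_⟩
  intro W hW g hg A hA hAfin
  have hKC : K ≤ ENNReal.ofReal (K.toReal + 1) := by
    conv_lhs => rw [← ENNReal.ofReal_toReal hKT]
    exact ENNReal.ofReal_le_ofReal (by linarith)
  suffices hsuff : packMeasure j A ≤ K * μH[(j : ℝ)] A from
    hsuff.trans (mul_le_mul_left hKC _)
  set G := lipGraph W g with hGdef
  obtain ⟨hGclosed, hLOW0, hUP⟩ := lipGraph_measure_bounds' M W hW g hg c Ce hball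
  have hLOW : ∀ x ∈ G, ∀ r : ℝ, 0 ≤ r →
      c1 * (ENNReal.ofReal r)^j ≤ μH[(j : ℝ)] (G ∩ Metric.closedBall x r) := by
    intro x hx r hr
    exact hLOW0 x hx r hr
  have hGmeas : MeasurableSet G := hGclosed.measurableSet
  rcases Nat.eq_zero_or_pos j with hj0 | hj1
  · -- the case j = 0 : the graph is a single point
    subst hj0
    have hW0 : W = ⊥ := Submodule.finrank_eq_zero.mp hW
    set z0 : EuclideanSpace ℝ (Fin n) :=
      ((0:W) : EuclideanSpace ℝ (Fin n)) + ((g 0 : Wᗮ) : EuclideanSpace ℝ (Fin n)) with hz0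
    have hGsing : G = {z0} := by
      ext p
      constructor
      · rintro ⟨x, rfl⟩
        have hx0 : x = 0 := by
          apply Subtype.ext
          exact (Submodule.eq_bot_iff W).mp hW0 x.1 x.2
        rw [hx0]
        exact Set.mem_singleton _
      · rintro rfl
        exact ⟨0, rfl⟩
    have hAsub : A ⊆ {z0} := hGsing ▸ hA
    rcases Set.subset_singleton_iff_eq.mp hAsub with hAe | hAe
    · rw [hAe, packMeasure_empty']
      exact zero_le
    · rw [hAe]
      have hH1 : μH[((0:ℕ) : ℝ)] ({z0} : Set (EuclideanSpace ℝ (Fin n))) = 1 := by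
        rw [Nat.cast_zero]
        exact Measure.hausdorffMeasure_zero_singleton z0
      rw [hH1, mul_one]
      -- packMeasure 0 {z0} ≤ 1 ≤ K
      have hpre : ∀ η : ℝ, packPre (n := n) 0 η {z0} ≤ 1 := by
        intro η
        refine iSup₂_le fun Dp hDp => ?_
        obtain ⟨hcnt, hmem, hdisj⟩ := hDp
        have hsub : Dp.Subsingleton := by
          intro p hp q hq
          by_contra hpq
          have h1 := hdisj hp hq hpq
          have hz1 : z0 ∈ Metric.closedBall p.1 p.2 := by
            have := (hmem p hp).1
            rw [Set.mem_singleton_iff] at this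
            rw [this]
            exact Metric.mem_closedBall_self (hmem p hp).2.1.le
          have hz2 : z0 ∈ Metric.closedBall q.1 q.2 := by
            have := (hmem q hq).1
            rw [Set.mem_singleton_iff] at this
            rw [this]
            exact Metric.mem_closedBall_self (hmem q hq).2.1.le
          exact (Set.disjoint_left.mp h1 hz1) hz2
        rcases hsub.eq_empty_or_singleton with hDe | ⟨p, hDe⟩
        · subst hDe
          rw [tsum_empty]
          exact zero_le_one
        · subst hDe
          haveI : Unique (({p} : Set (EuclideanSpace ℝ (Fin n) × ℝ)) : Type _) :=
            Set.uniqueSingleton p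
          rw [tsum_eq_single default (fun b hb => absurd (Subsingleton.elim b default) hb)]
          exact (pow_zero _).le
      have hp0 : packPre0 (n := n) 0 {z0} ≤ 1 := (iInf₂_le 1 one_pos).trans (hpre 1)
      have hcov : ({z0} : Set (EuclideanSpace ℝ (Fin n))) ⊆
          ⋃ i : ℕ, (if i = 0 then ({z0} : Set (EuclideanSpace ℝ (Fin n))) else ∅) := by
        intro x hx
        exact Set.mem_iUnion.2 ⟨0, by simpa using hx⟩
      refine le_trans (iInf₂_le (fun i => if i = 0 then ({z0} : Set (EuclideanSpace ℝ (Fin n))) else ∅) hcov) ?_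
      have hle : ∀ i : ℕ, packPre0 (n := n) 0 (if i = 0 then ({z0} : Set _) else ∅)
          ≤ if i = 0 then (1:ℝ≥0∞) else 0 := by
        intro i
        by_cases hi : i = 0 <;> simp only [hi, if_true, if_false, ite_true, ite_false]
        · exact hp0
        · exact le_of_eq packPre0_empty'
      calc (∑' i : ℕ, packPre0 (n := n) 0 (if i = 0 then ({z0} : Set _) else ∅))
          ≤ ∑' i : ℕ, (if i = 0 then (1:ℝ≥0∞) else 0) := ENNReal.tsum_le_tsum hle
        _ = 1 := tsum_ite_eq 0 1
        _ ≤ K := by rw [hKdef]; exact le_add_self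
  -- main case : j ≥ 1
  · set μ : Measure (EuclideanSpace ℝ (Fin n)) := μH[(j : ℝ)].restrict G with hμdef
    have hμapp : ∀ s : Set (EuclideanSpace ℝ (Fin n)), μ s = μH[(j : ℝ)] (s ∩ G) :=
      fun s => Measure.restrict_apply' hGmeas
    haveI : IsLocallyFiniteMeasure μ := by
      refine ⟨fun x => ⟨Metric.closedBall x 1, Metric.closedBall_mem_nhds x one_pos, ?_⟩⟩
      rw [hμapp, Set.inter_comm]
      calc μH[(j : ℝ)] (G ∩ Metric.closedBall x 1)
          ≤ ((1+M : ℝ≥0) : ℝ≥0∞)^j * Ce * (ENNReal.ofReal 1)^j := hUP x 1 zero_le_one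
        _ < ⊤ := by
            refine ENNReal.mul_lt_top (ENNReal.mul_lt_top ?_ hCeT)
              (ENNReal.pow_lt_top ENNReal.ofReal_lt_top)
            exact ENNReal.pow_lt_top ENNReal.coe_lt_top
    have hμA : μ A = μH[(j : ℝ)] A := by
      rw [hμapp, Set.inter_eq_self_of_subset_left hA]
    have hGtop : μH[(j : ℝ)] G = ⊤ := by
      by_contra hne
      set x0 : EuclideanSpace ℝ (Fin n) :=
        ((0:W) : EuclideanSpace ℝ (Fin n)) + ((g 0 : Wᗮ) : EuclideanSpace ℝ (Fin n)) with hx0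
      have hGne : x0 ∈ G := ⟨0, rfl⟩
      have hk : ∀ k : ℕ, c1 * (k : ℝ≥0∞) ≤ μH[(j : ℝ)] G := by
        intro k
        have h1 := hLOW x0 hGne (k : ℝ) (Nat.cast_nonneg k)
        have h2 : μH[(j : ℝ)] (G ∩ Metric.closedBall x0 (k : ℝ)) ≤ μH[(j : ℝ)] G :=
          measure_mono Set.inter_subset_left
        refine le_trans ?_ (h1.trans h2)
        rw [ENNReal.ofReal_natCast]
        rcases Nat.eq_zero_or_pos k with rfl | hk1
        · simp
        · exact mul_le_mul_right (le_self_pow₀ (by exact_mod_cast Nat.one_le_cast.2 hk1) hj1.ne') _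
      obtain ⟨k, hklt⟩ := ENNReal.exists_nat_gt ((ENNReal.div_lt_top hne hc10.ne').ne)
      rw [ENNReal.div_lt_iff (Or.inl hc10.ne') (Or.inl hc1T.ne)] at hklt
      rw [mul_comm] at hklt
      exact absurd (hk k) (not_le.2 hklt)
    refine ENNReal.le_of_forall_pos_le_add fun ε hε hKμ => ?_
    set δ : ℝ≥0∞ := (ε : ℝ≥0∞) / K with hδdef
    have hδ0 : δ ≠ 0 := by
      rw [hδdef]
      exact (ENNReal.div_pos (by exact_mod_cast hε.ne') hKT).ne'
    have hδT : δ < ⊤ := ENNReal.div_lt_top ENNReal.coe_ne_top hK0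
    have hμAfin : μ A ≠ ⊤ := by rw [hμA]; exact hAfin.ne
    obtain ⟨U, hAU, hUopen, hUlt⟩ :=
      Set.exists_isOpen_lt_of_lt A (μ A + δ) (ENNReal.lt_add_right hμAfin hδ0)
    have hUfin : μ U < ⊤ := hUlt.trans (by
      rw [hμA]
      exact ENNReal.add_lt_top.2 ⟨hAfin, hδT⟩)
    have hUcne : Uᶜ.Nonempty := by
      rw [Set.nonempty_compl]
      intro hUuniv
      have hμuniv : μ Set.univ = ⊤ := by rw [hμapp, Set.univ_inter, hGtop]
      rw [hUuniv, hμuniv] at hUfin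
      exact absurd hUfin (lt_irrefl _)
    set d : EuclideanSpace ℝ (Fin n) → ℝ := fun y => Metric.infDist y Uᶜ with hddef
    have hdcont : Continuous d := Metric.continuous_infDist_pt _
    have hdlip : ∀ y x, |d y - d x| ≤ dist y x := by
      intro y x
      have h := (Metric.lipschitz_infDist_pt (Uᶜ)).dist_le_mul y x
      rwa [Real.dist_eq, NNReal.coe_one, one_mul] at h
    have hdpos : ∀ x ∈ U, 0 < d x := by
      intro x hx
      exact (hUopen.isClosed_compl.notMem_iff_infDist_pos hUcne).1 (by simpa using hx)
    have hdU : ∀ y, 0 < d y → y ∈ U := by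
      intro y hy
      by_contra hyU
      rw [hddef] at hy
      simp only at hy
      rw [Metric.infDist_zero_of_mem (by simpa using hyU)] at hy
      exact lt_irrefl _ hy
    set pw : ℕ → ℝ := fun m => (2⁻¹ : ℝ)^m with hpwdef
    have hpwpos : ∀ m, 0 < pw m := fun m => by positivity
    have hpwanti : ∀ {s t : ℕ}, s ≤ t → pw t ≤ pw s := fun h =>
      pow_le_pow_of_le_one (by norm_num) (by norm_num) h
    have hpw8 : ∀ k, pw (k+1) = 8 * pw (k+4) := by
      intro k
      simp only [hpwdef]
      rw [pow_add, pow_add]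
      norm_num
      ring
    have hpw16 : ∀ k, pw k = 16 * pw (k+4) := by
      intro k
      simp only [hpwdef]
      rw [pow_add]
      norm_num
      ring
    have hpw4 : ∀ k, pw (k+6) = pw (k+4) / 4 := by
      intro k
      simp only [hpwdef]
      rw [pow_add, pow_add]
      norm_num
      ring
    have hpw0 : pw 0 = 1 := by norm_num [hpwdef]
    have h532 : pw 5 = 1/32 := by norm_num [hpwdef]
    have hpwsmall : ∀ ε : ℝ, 0 < ε → ∃ k, pw k ≤ ε := by
      intro ε hε
      obtain ⟨k, hk⟩ := exists_pow_lt_of_lt_one hε (by norm_num : (2⁻¹:ℝ) < 1)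
      exact ⟨k, hk.le⟩
    clear_value pw
    clear hpwdef
    clear_value d
    set D : ℕ → Set (EuclideanSpace ℝ (Fin n)) := fun m =>
      Nat.casesOn m {x ∈ A | 1 ≤ d x}
        (fun k => {x ∈ A | pw (k+1) ≤ d x ∧ d x < pw k}) with hDdef
    set Tt : ℕ → Set (EuclideanSpace ℝ (Fin n)) := fun m =>
      Nat.casesOn m {y | 7/8 ≤ d y}
        (fun k => {y | 7 * pw (k+4) ≤ d y ∧ d y ≤ 17 * pw (k+4)}) with hTtdef
    set η : ℕ → ℝ := fun m => Nat.casesOn m (8⁻¹ : ℝ) (fun k => pw (k+4)) with hηdef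
    have hηpos : ∀ m, 0 < η m := by
      intro m
      cases m with
      | zero => norm_num [hηdef]
      | succ k => exact hpwpos (k+4)
    have hDsubA : ∀ m, D m ⊆ A := by
      intro m
      cases m with
      | zero => exact fun x hx => hx.1
      | succ k => exact fun x hx => hx.1
    have hcover : A ⊆ ⋃ m, D m := by
      intro x hx
      have h0 : 0 < d x := hdpos x (hAU hx)
      by_cases h1 : 1 ≤ d x
      · exact Set.mem_iUnion.2 ⟨0, ⟨hx, h1⟩⟩
      · push_neg at h1
        have hex : ∃ k, pw k ≤ d x := hpwsmall _ h0
        have hk0 : pw (Nat.find hex) ≤ d x := Nat.find_spec hex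
        have hk0ne : Nat.find hex ≠ 0 := by
          intro h
          rw [h, hpw0] at hk0
          exact absurd hk0 (not_le.2 h1)
        obtain ⟨k, hkeq⟩ := Nat.exists_eq_succ_of_ne_zero hk0ne
        have hlt : d x < pw k := lt_of_not_ge (Nat.find_min hex (by omega))
        rw [hkeq] at hk0
        exact Set.mem_iUnion.2 ⟨k+1, ⟨hx, hk0, hlt⟩⟩
    have hballsub : ∀ m x, x ∈ D m → ∀ r : ℝ, 0 < r → r ≤ η m →
        Metric.closedBall x r ⊆ U ∩ Tt m := by
      intro m x hx r hr0 hrη y hy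
      rw [Metric.mem_closedBall] at hy
      have hdy : |d y - d x| ≤ r := le_trans (hdlip y x) hy
      rw [abs_le] at hdy
      obtain ⟨hdy1, hdy2⟩ := hdy
      cases m with
      | zero =>
        obtain ⟨hxA, hx1⟩ := hx
        have hrb : r ≤ 8⁻¹ := hrη
        refine ⟨hdU y (by linarith), ?_⟩
        show 7/8 ≤ d y
        linarith
      | succ k =>
        obtain ⟨hxA, hx1, hx2⟩ := hx
        have hrb : r ≤ pw (k+4) := hrη
        have h8 := hpw8 k
        have h16 := hpw16 k
        have hp4 := hpwpos (k+4)
        refine ⟨hdU y (by linarith), ?_, ?_⟩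
        · show 7 * pw (k+4) ≤ d y
          linarith
        · show d y ≤ 17 * pw (k+4)
          linarith
    have hTdisj : ∀ a b : ℕ, a + 2 ≤ b → Disjoint (Tt a) (Tt b) := by
      intro a b hab
      rw [Set.disjoint_left]
      intro y hya hyb
      obtain ⟨t, rfl⟩ : ∃ t, b = t + (a + 2) := ⟨b - (a+2), by omega⟩
      cases a with
      | zero =>
        have hya' : 7/8 ≤ d y := hya
        have hyb' : 7 * pw ((t+1)+4) ≤ d y ∧ d y ≤ 17 * pw ((t+1)+4) := hyb
        have hanti : pw ((t+1)+4) ≤ pw 5 := hpwanti (by omega)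
        have hp := hpwpos ((t+1)+4)
        linarith [hyb'.2, hya', h532]
      | succ l =>
        have hya' : 7 * pw (l+4) ≤ d y ∧ d y ≤ 17 * pw (l+4) := hya
        have hyb' : 7 * pw ((t+l+2)+4) ≤ d y ∧ d y ≤ 17 * pw ((t+l+2)+4) := hyb
        have hanti : pw ((t+l+2)+4) ≤ pw (l+6) := hpwanti (by omega)
        have h4 := hpw4 l
        have hp := hpwpos (l+4)
        linarith [hya'.1, hyb'.2]
    have hTtmeas : ∀ m, MeasurableSet (Tt m) := by
      intro m
      cases m with
      | zero => exact measurableSet_le measurable_const hdcont.measurable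
      | succ k =>
        exact (measurableSet_le measurable_const hdcont.measurable).inter
          (measurableSet_le hdcont.measurable measurable_const)
    have hpack : ∀ m, packPre0 j (D m) ≤ 2^j * c1⁻¹ * μ (U ∩ Tt m) := by
      intro m
      refine le_trans (iInf₂_le (η m) (hηpos m)) ?_
      refine iSup₂_le fun Dp hDp => ?_
      obtain ⟨hcnt, hmem, hdisj⟩ := hDp
      have hterm : ∀ p : Dp,
          (ENNReal.ofReal (Metric.diam (Metric.closedBall (p : EuclideanSpace ℝ (Fin n) × ℝ).1
            (p : EuclideanSpace ℝ (Fin n) × ℝ).2)))^j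
          ≤ 2^j * c1⁻¹ * μ (Metric.closedBall (p : EuclideanSpace ℝ (Fin n) × ℝ).1
            (p : EuclideanSpace ℝ (Fin n) × ℝ).2) := by
        intro p
        obtain ⟨hxD, hr0, hrη⟩ := hmem ↑p p.2
        have hxG : (p : EuclideanSpace ℝ (Fin n) × ℝ).1 ∈ G := hA (hDsubA m hxD)
        have h1 : ENNReal.ofReal (Metric.diam (Metric.closedBall
            (p : EuclideanSpace ℝ (Fin n) × ℝ).1 (p : EuclideanSpace ℝ (Fin n) × ℝ).2))
            ≤ 2 * ENNReal.ofReal (p : EuclideanSpace ℝ (Fin n) × ℝ).2 := by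
          calc ENNReal.ofReal (Metric.diam (Metric.closedBall
              (p : EuclideanSpace ℝ (Fin n) × ℝ).1 (p : EuclideanSpace ℝ (Fin n) × ℝ).2))
              ≤ ENNReal.ofReal (2 * (p : EuclideanSpace ℝ (Fin n) × ℝ).2) :=
                ENNReal.ofReal_le_ofReal (Metric.diam_closedBall hr0.le)
            _ = 2 * ENNReal.ofReal (p : EuclideanSpace ℝ (Fin n) × ℝ).2 := by
                rw [ENNReal.ofReal_mul (by norm_num)]
                norm_num
        calc (ENNReal.ofReal (Metric.diam (Metric.closedBall
            (p : EuclideanSpace ℝ (Fin n) × ℝ).1 (p : EuclideanSpace ℝ (Fin n) × ℝ).2)))^j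
            ≤ (2 * ENNReal.ofReal (p : EuclideanSpace ℝ (Fin n) × ℝ).2)^j :=
              pow_le_pow_left' h1 _
          _ = 2^j * (ENNReal.ofReal (p : EuclideanSpace ℝ (Fin n) × ℝ).2)^j := mul_pow _ _ _
          _ ≤ 2^j * (c1⁻¹ * μH[(j : ℝ)] (G ∩ Metric.closedBall
              (p : EuclideanSpace ℝ (Fin n) × ℝ).1 (p : EuclideanSpace ℝ (Fin n) × ℝ).2)) := by
              refine mul_le_mul_right ?_ _
              have hlw := hLOW _ hxG _ hr0.le
              calc (ENNReal.ofReal (p : EuclideanSpace ℝ (Fin n) × ℝ).2)^j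
                  = c1⁻¹ * (c1 * (ENNReal.ofReal (p : EuclideanSpace ℝ (Fin n) × ℝ).2)^j) := by
                    rw [← mul_assoc, ENNReal.inv_mul_cancel hc10.ne' hc1T.ne, one_mul]
                _ ≤ c1⁻¹ * μH[(j : ℝ)] (G ∩ Metric.closedBall
                    (p : EuclideanSpace ℝ (Fin n) × ℝ).1
                    (p : EuclideanSpace ℝ (Fin n) × ℝ).2) := mul_le_mul_right hlw _
          _ = 2^j * c1⁻¹ * μ (Metric.closedBall (p : EuclideanSpace ℝ (Fin n) × ℝ).1
              (p : EuclideanSpace ℝ (Fin n) × ℝ).2) := by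
              rw [hμapp, Set.inter_comm, mul_assoc]
      calc (∑' p : Dp, (ENNReal.ofReal (Metric.diam (Metric.closedBall
          (p : EuclideanSpace ℝ (Fin n) × ℝ).1 (p : EuclideanSpace ℝ (Fin n) × ℝ).2)))^j)
          ≤ ∑' p : Dp, 2^j * c1⁻¹ * μ (Metric.closedBall
            (p : EuclideanSpace ℝ (Fin n) × ℝ).1 (p : EuclideanSpace ℝ (Fin n) × ℝ).2) :=
            ENNReal.tsum_le_tsum hterm
        _ = 2^j * c1⁻¹ * ∑' p : Dp, μ (Metric.closedBall
            (p : EuclideanSpace ℝ (Fin n) × ℝ).1 (p : EuclideanSpace ℝ (Fin n) × ℝ).2) :=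
            ENNReal.tsum_mul_left
        _ = 2^j * c1⁻¹ * μ (⋃ p ∈ Dp, Metric.closedBall p.1 p.2) := by
            rw [measure_biUnion hcnt hdisj (fun b _ => measurableSet_closedBall)]
        _ ≤ 2^j * c1⁻¹ * μ (U ∩ Tt m) := by
            refine mul_le_mul_right (measure_mono ?_) _
            refine Set.iUnion₂_subset fun p hp => ?_
            obtain ⟨hxD, hr0, hrη⟩ := hmem p hp
            exact hballsub m p.1 hxD p.2 hr0 hrη
    have hsum : (∑' m, μ (U ∩ Tt m)) ≤ 2 * μ U := by
      have hpair : ∀ f : ℕ → ℕ, (∀ k k', k ≠ k' → f k + 2 ≤ f k' ∨ f k' + 2 ≤ f k) →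
          (∑' k : ℕ, μ (U ∩ Tt (f k))) ≤ μ U := by
        intro f hf
        rw [← measure_iUnion ?_ (fun k => hUopen.measurableSet.inter (hTtmeas (f k)))]
        · exact measure_mono (Set.iUnion_subset fun k => Set.inter_subset_left)
        · intro k k' hkk'
          rcases hf k k' hkk' with h | h
          · exact ((hTdisj _ _ h).mono Set.inter_subset_right Set.inter_subset_right)
          · exact ((hTdisj _ _ h).symm.mono Set.inter_subset_right Set.inter_subset_right)
      calc (∑' m, μ (U ∩ Tt m))
          = (∑' k, μ (U ∩ Tt (2*k))) + ∑' k, μ (U ∩ Tt (2*k+1)) :=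
            (tsum_even_add_odd ENNReal.summable ENNReal.summable).symm
        _ ≤ μ U + μ U := add_le_add
            (hpair (fun k => 2*k) (fun k k' h => by omega))
            (hpair (fun k => 2*k+1) (fun k k' h => by omega))
        _ = 2 * μ U := (two_mul _).symm
    calc packMeasure j A ≤ ∑' m, packPre0 j (D m) := iInf₂_le D hcover
      _ ≤ ∑' m, 2^j * c1⁻¹ * μ (U ∩ Tt m) := ENNReal.tsum_le_tsum hpack
      _ = 2^j * c1⁻¹ * ∑' m, μ (U ∩ Tt m) := ENNReal.tsum_mul_left
      _ ≤ 2^j * c1⁻¹ * (2 * μ U) := mul_le_mul_right hsum _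
      _ = 2^(j+1) * c1⁻¹ * μ U := by ring
      _ ≤ K * μ U := by
          refine mul_le_mul_left ?_ _
          rw [hKdef]
          exact le_add_right le_rfl
      _ ≤ K * (μ A + δ) := mul_le_mul_right hUlt.le _
      _ = K * μ A + K * δ := mul_add _ _ _
      _ ≤ K * μH[(j : ℝ)] A + ε := by
          rw [hμA]
          refine add_le_add_right ?_ _
          rw [hδdef]
          exact ENNReal.mul_div_le

end ReifenbergPaper
end
end
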